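/- arXiv:1503.08280 — 3 statements merged into one kernel-verified Lean document; each statement's English description precedes it below -/
import Mathlib

section
/- Discrete isoperimetric (critical Sobolev) inequality on boxes (Theorem 2.7): Let d ≥ 2 and p* = d/(d−1). There exists a constant C < ∞, depending only on d, such that for every positive integer r and every function f : B_r → ℝ, one has ‖f − f̄_r‖_{L^{p*}(B_r)} ≤ C ‖∇f‖_{L^1(𝔹_r)}, where f̄_r = |B_r|^{−1} ∑_{x∈B_r} f(x). -/
open scoped ENNReal NNReal
open Set MeasureTheory

noncomputable section

namespace AnchoredNash

/-- Vertices of `ℤ^d`. -/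
abbrev Zd (d : ℕ) : Type := Fin d → ℤ

/-- Nearest-neighbour edges of `ℤ^d`, encoded as a base point together with a
direction: the pair `(x, i)` stands for the edge `{x, x + eᵢ}`. -/
abbrev Edge (d : ℕ) : Type := (Fin d → ℤ) × Fin d

/-- The second endpoint `x + eᵢ` of the edge `(x, i)`. -/
def eplus {d : ℕ} (e : Edge d) : Zd d := e.1 + Pi.single e.2 1

/-- Euclidean norm on `ℤ^d`. -/
def eucNorm {d : ℕ} (x : Zd d) : ℝ := Real.sqrt (∑ i, ((x i : ℝ)) ^ 2)

/-- `|x|_* = max (|x|, 1)`. -/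
def xstar {d : ℕ} (x : Zd d) : ℝ := max (eucNorm x) 1

/-- The box `B_r = {-r, …, r}^d`. -/
def box (d r : ℕ) : Finset (Zd d) := Fintype.piFinset fun _ => Finset.Icc (-(r : ℤ)) (r : ℤ)

/-- The set `𝔹_r` of edges with both endpoints in `B_r`. -/
def edgeBox (d r : ℕ) : Finset (Edge d) :=
  (box d r ×ˢ (Finset.univ : Finset (Fin d))).filter fun e => eplus e ∈ box d r

/-- Squared gradient `|∇f|(e)²` of `f` along the edge `e`, valued in `ℝ≥0∞`. -/
def grad2 {d : ℕ} (f : Zd d → ℝ) (e : Edge d) : ℝ≥0∞ :=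
  (‖f (eplus e) - f e.1‖₊ : ℝ≥0∞) ^ 2

/-- `‖f‖₂`, valued in `ℝ≥0∞`. -/
def l2 {d : ℕ} (f : Zd d → ℝ) : ℝ≥0∞ := (∑' x, (‖f x‖₊ : ℝ≥0∞) ^ 2) ^ (1/2 : ℝ)

/-- `‖f‖₁`, valued in `ℝ≥0∞`. -/
def l1 {d : ℕ} (f : Zd d → ℝ) : ℝ≥0∞ := ∑' x, (‖f x‖₊ : ℝ≥0∞)

/-- `‖w ∇f‖₂`, valued in `ℝ≥0∞`. -/
def wGradNorm {d : ℕ} (w : Edge d → ℝ≥0) (f : Zd d → ℝ) : ℝ≥0∞ :=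
  (∑' e, (w e : ℝ≥0∞) ^ 2 * grad2 f e) ^ (1/2 : ℝ)

/-- `‖ |x|_*^{p/2} f ‖₂`, valued in `ℝ≥0∞`. -/
def wl2 {d : ℕ} (p : ℝ) (f : Zd d → ℝ) : ℝ≥0∞ :=
  (∑' x, ENNReal.ofReal (xstar x ^ p) * (‖f x‖₊ : ℝ≥0∞) ^ 2) ^ (1/2 : ℝ)

/-- The anchored maximal function
`M_q(w) = (sup_{r ≥ 1} |𝔹_r|⁻¹ ∑_{e ∈ 𝔹_r} w(e)^{-q})^{1/q}`, with the convention
`0 ^ (-q) = ∞` (automatic in `ℝ≥0∞`). -/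
def Mq (d : ℕ) (q : ℝ) (w : Edge d → ℝ≥0) : ℝ≥0∞ :=
  (⨆ (r : ℕ) (_ : 1 ≤ r),
    ((edgeBox d r).card : ℝ≥0∞)⁻¹ * ∑ e ∈ edgeBox d r, (w e : ℝ≥0∞) ^ (-q)) ^ (1/q)

/-- The critical exponent `θ_c`, defined by
`1/θ_c = 1 + ((dp+2p)/(dp+2d)) (q/d - 1)`. -/
def θcrit (d : ℕ) (p q : ℝ) : ℝ :=
  1 / (1 + (((d : ℝ) * p + 2 * p) / ((d : ℝ) * p + 2 * (d : ℝ))) * (q / (d : ℝ) - 1))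

/-- `L^s` norm of `f` on the box `B_r`. -/
def boxLp (d r : ℕ) (s : ℝ) (f : Zd d → ℝ) : ℝ := (∑ x ∈ box d r, |f x| ^ s) ^ (1/s)

/-- `L^∞` norm of `f` on the box `B_r`. -/
def boxLinf (d r : ℕ) (f : Zd d → ℝ) : ℝ := sSup ((fun x => |f x|) '' (box d r : Set (Zd d)))

/-- `L^s` norm of `∇f` on the edge set `𝔹_r`. -/
def gradLp (d r : ℕ) (s : ℝ) (f : Zd d → ℝ) : ℝ :=
  (∑ e ∈ edgeBox d r, |f (eplus e) - f e.1| ^ s) ^ (1/s)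

/-- Average of `f` over the box `B_r`. -/
def avg (d r : ℕ) (f : Zd d → ℝ) : ℝ := (∑ x ∈ box d r, f x) / ((box d r).card : ℝ)

/-- Generator of the random walk among the conductances `a`:
`(gen a f) y = ∑_{z ∼ y} a({y,z}) (f z - f y)`. -/
def gen {d : ℕ} (a : Edge d → ℝ) (f : Zd d → ℝ) (y : Zd d) : ℝ :=
  ∑ i : Fin d,
    (a (y, i) * (f (y + Pi.single i 1) - f y) +
      a (y - Pi.single i 1, i) * (f (y - Pi.single i 1) - f y))

/-- `hk` is the heat kernel of the static environment `a`: the (unique) bounded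
solution of `∂_t p_t(x,y) = ∑_{z ∼ y} a({y,z})(p_t(x,z) - p_t(x,y))`, `p_0(x,y) = 1_{x=y}`,
together with its standard properties (nonnegativity, total mass one, symmetry). -/
structure IsHeatKernel (d : ℕ) (a : Edge d → ℝ) (hk : ℝ → Zd d → Zd d → ℝ) : Prop where
  bounded : ∀ t, ∃ M, ∀ x y, |hk t x y| ≤ M
  init : ∀ x y, hk 0 x y = if x = y then (1 : ℝ) else 0
  ode : ∀ x y, ∀ t ∈ Ici (0 : ℝ),
    HasDerivWithinAt (fun s => hk s x y) (gen a (fun z => hk t x z) y) (Ici (0 : ℝ)) t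
  nonneg : ∀ t x y, 0 ≤ t → 0 ≤ hk t x y
  mass : ∀ t x, 0 ≤ t → HasSum (fun y => hk t x y) 1
  symm : ∀ t x y, 0 ≤ t → hk t x y = hk t y x

/-- The Dirichlet energy `∑_e a(e) |∇u|(e)²`, valued in `ℝ≥0∞`. -/
def dirichlet {d : ℕ} (a : Edge d → ℝ) (u : Zd d → ℝ) : ℝ≥0∞ :=
  ∑' e, ENNReal.ofReal (a e) * grad2 u e

/-- The static environment `a` (with heat kernel `hk`) is `w`-moderate:
`‖w ∇u_t‖₂² ≤ D_t` for all `t ≥ 0`, where `u_t = p_t(0, ·)`. -/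
def StaticModerate (d : ℕ) (a : Edge d → ℝ) (w : Edge d → ℝ≥0)
    (hk : ℝ → Zd d → Zd d → ℝ) : Prop :=
  ∀ t, 0 ≤ t →
    ∑' e, (w e : ℝ≥0∞) ^ 2 * grad2 (fun z => hk t 0 z) e ≤ dirichlet a fun z => hk t 0 z

/-- Piecewise continuity: continuity away from a countable set. -/
def PiecewiseCts (g : ℝ → ℝ) : Prop :=
  ∃ D : Set ℝ, D.Countable ∧ ∀ t ∉ D, ContinuousAt g t

/-- A dynamic environment: for each edge, a piecewise continuous `[0,1]`-valued
function of time. -/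
def IsDynEnv (d : ℕ) (a : ℝ → Edge d → ℝ) : Prop :=
  (∀ t e, a t e ∈ Icc (0 : ℝ) 1) ∧ ∀ e, PiecewiseCts fun t => a t e

/-- `hk` is the heat kernel of the dynamic environment `a`: the (unique) bounded
solution of `∂_t p_{s,t}(x,y) = ∑_{z ∼ y} a_t({y,z})(p_{s,t}(x,z) - p_{s,t}(x,y))` with
`p_{s,s}(x,y) = 1_{x=y}` (stated in integral form), together with its standard
properties (nonnegativity, total mass one). -/
structure IsDynKernel (d : ℕ) (a : ℝ → Edge d → ℝ) (hk : ℝ → ℝ → Zd d → Zd d → ℝ) :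
    Prop where
  bounded : ∀ s t, ∃ M, ∀ x y, |hk s t x y| ≤ M
  eqn : ∀ s x y t, s ≤ t →
    hk s t x y = (if x = y then (1:ℝ) else 0) + ∫ τ in s..t, gen (a τ) (fun z => hk s τ x z) y
  nonneg : ∀ s t x y, s ≤ t → 0 ≤ hk s t x y
  mass : ∀ s t x, s ≤ t → HasSum (fun y => hk s t x y) 1

/-- The Dirichlet energy `D_t = ∑_e a_t(e) |∇u_t|(e)²` of `u_t = p_{0,t}(0,·)`. -/
def dynD (d : ℕ) (a : ℝ → Edge d → ℝ) (hk : ℝ → ℝ → Zd d → Zd d → ℝ) (t : ℝ) : ℝ≥0∞ :=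
  ∑' e : Edge d, ENNReal.ofReal (a t e) * grad2 (fun z => hk 0 t 0 z) e

/-- The dynamic environment `a` (with heat kernel `hk`) is `(w,K)`-moderate:
`‖w_t ∇u_t‖₂² ≤ D̄_t = ∫_t^∞ K_{s-t} D_s ds` for all `t ≥ 0`. -/
def DynModerate (d : ℕ) (a : ℝ → Edge d → ℝ) (K : ℝ → ℝ) (w : ℝ → Edge d → ℝ≥0)
    (hk : ℝ → ℝ → Zd d → Zd d → ℝ) : Prop :=
  ∀ t, 0 ≤ t →
    ∑' e, (w t e : ℝ≥0∞) ^ 2 * grad2 (fun z => hk 0 t 0 z) e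
      ≤ ∫⁻ s in Ici t, ENNReal.ofReal (K (s - t)) * dynD d a hk s

/-- `C(K) = max (1, ‖K‖₁^{α/β} / ‖K‖_{L¹([0,1])}^{(1-α)/β})`. -/
def CK (α β : ℝ) (K : ℝ → ℝ) : ℝ≥0∞ :=
  max 1 ((∫⁻ s in Ici (0:ℝ), ENNReal.ofReal (K s)) ^ (α / β)
    / (∫⁻ s in Icc (0:ℝ) 1, ENNReal.ofReal (K s)) ^ ((1 - α) / β))

/-- The space-time maximal quantity `𝓜_q(w)`, defined through
`𝓜_q(w)⁻² = inf_{t ≥ 1} t⁻¹ ∫_0^t M_q(w_s)⁻² ds`. -/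
def MMq (d : ℕ) (q : ℝ) (w : ℝ → Edge d → ℝ≥0) : ℝ≥0∞ :=
  (⨅ (t : ℝ) (_ : 1 ≤ t),
    ENNReal.ofReal t⁻¹ * ∫⁻ s in Ioc (0:ℝ) t, Mq d q (w s) ^ (-2 : ℝ)) ^ (-(1/2) : ℝ)

/-- The standing hypotheses on `K : ℝ₊ → ℝ₊`: measurable, nonnegative, integrable,
with positive mass on `[0,1]`. -/
def GoodK (K : ℝ → ℝ) : Prop :=
  Measurable K ∧ (∀ s, 0 ≤ K s) ∧ IntegrableOn K (Ici (0:ℝ)) ∧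
    (∫⁻ s in Icc (0:ℝ) 1, ENNReal.ofReal (K s)) ≠ 0

/-- The standing hypotheses on the weights: a measurable family with values in `[0,1]`. -/
def GoodW (d : ℕ) (w : ℝ → Edge d → ℝ≥0) : Prop :=
  (∀ t e, w t e ≤ 1) ∧ ∀ e, Measurable fun t => w t e

end AnchoredNash


namespace AnchoredNash

instance intCountSF : SigmaFinite (Measure.count : Measure ℤ) := by
  refine ⟨⟨⟨fun n => Set.Icc (-(n:ℤ)) n, fun _ => trivial, fun n => ?_, ?_⟩⟩⟩
  · exact Measure.count_apply_lt_top.mpr (Set.finite_Icc _ _)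
  · ext m; simp only [Set.mem_iUnion, Set.mem_Icc, Set.mem_univ, iff_true]
    exact ⟨m.natAbs, by omega, by omega⟩

lemma pi_count (d : ℕ) :
    (Measure.pi (fun _ : Fin d => (Measure.count : Measure ℤ))) = Measure.count := by
  refine Measure.ext fun s hs => ?_
  have hcs : s.Countable := (Set.to_countable s)
  have h1 : ∀ x : Zd d, (Measure.pi (fun _ : Fin d => (Measure.count : Measure ℤ))) {x} = 1 := by
    intro x
    rw [← Set.univ_pi_singleton x, Measure.pi_pi]
    simp [Measure.count_singleton]
  have hdec : s = ⋃ x ∈ s, {x} := by simp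
  calc (Measure.pi (fun _ : Fin d => (Measure.count : Measure ℤ))) s
      = (Measure.pi (fun _ : Fin d => (Measure.count : Measure ℤ))) (⋃ x ∈ s, {x}) := by
        rw [← hdec]
    _ = ∑' x : s, (Measure.pi (fun _ : Fin d => (Measure.count : Measure ℤ))) {(x : Zd d)} :=
        measure_biUnion hcs (fun x _ y _ hxy => by simp [hxy])
          (fun x _ => measurableSet_singleton x)
    _ = ∑' _ : s, 1 := by simp [h1]
    _ = Measure.count s := by rw [Measure.count_apply hs, ENNReal.tsum_one]; rfl

lemma grid_discrete {d : ℕ} (hd : 2 ≤ d) (φ : Zd d → ℝ≥0∞) :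
    ∑' x : Zd d, ∏ k : Fin d, (∑' t : ℤ, φ (Function.update x k t)) ^ ((1:ℝ)/((d:ℝ)-1))
      ≤ (∑' x : Zd d, φ x) ^ ((d:ℝ)/((d:ℝ)-1)) := by
  have hconj : ((Fintype.card (Fin d) : ℝ)).HolderConjugate ((d:ℝ)/((d:ℝ)-1)) := by
    rw [Fintype.card_fin]
    exact Real.HolderConjugate.conjExponent (by exact_mod_cast Nat.lt_of_lt_of_le one_lt_two hd)
  have := MeasureTheory.lintegral_prod_lintegral_pow_le
    (fun _ : Fin d => (Measure.count : Measure ℤ)) hconj (f := φ) (measurable_of_countable φ)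
  rw [pi_count d] at this
  simp only [MeasureTheory.lintegral_count, Fintype.card_fin] at this
  exact this



lemma mem_box_iff {x : Zd d} : x ∈ box d r ↔ ∀ i, -(r:ℤ) ≤ x i ∧ x i ≤ r := by
  simp [box, Fintype.mem_piFinset]

lemma update_mem_box {x : Zd d} (hx : x ∈ box d r) (k : Fin d) {t : ℤ}
    (ht : -(r:ℤ) ≤ t ∧ t ≤ r) : Function.update x k t ∈ box d r := by
  rw [mem_box_iff] at hx ⊢
  intro i
  rcases eq_or_ne i k with rfl | h
  · simpa using ht
  · simpa [Function.update_of_ne h] using hx i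

lemma eplus_update (x : Zd d) (k : Fin d) (s : ℤ) :
    eplus (Function.update x k s, k) = Function.update x k (s+1) := by
  funext j
  rcases eq_or_ne j k with rfl | h
  · simp [eplus]
  · simp [eplus, Function.update_of_ne h, Pi.single_eq_of_ne h]

lemma mem_edgeBox_iff {z : Zd d} {k : Fin d} :
    (z, k) ∈ edgeBox d r ↔ z ∈ box d r ∧ eplus (z, k) ∈ box d r := by
  simp [edgeBox, Finset.mem_filter, Finset.mem_product]

lemma card_box : (box d r).card = (2*r+1)^d := by
  rw [box, Fintype.card_piFinset]
  have h : (Finset.Icc (-(r:ℤ)) (r:ℤ)).card = 2*r+1 := by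
    rw [Int.card_Icc]; omega
  simp [h]

/-- 1-D telescoping, monotone case. -/
lemma telescope_mono (h : ℤ → ℝ) (a : ℤ) : ∀ b : ℤ, a ≤ b →
    |h b - h a| ≤ ∑ s ∈ Finset.Ico a b, |h (s+1) - h s| := by
  refine Int.le_induction (by simp) ?_
  intro n hn ih
  have hIco : Finset.Ico a (n+1) = insert n (Finset.Ico a n) := by
    ext m; simp only [Finset.mem_Ico, Finset.mem_insert]; omega
  rw [hIco, Finset.sum_insert (by simp)]
  have h2 := abs_sub_le (h (n+1)) (h n) (h a)
  linarith

/-- 1-D telescoping on `[-r, r]`. -/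
lemma telescope (h : ℤ → ℝ) {a b : ℤ} {r : ℕ} (ha : -(r:ℤ) ≤ a ∧ a ≤ r)
    (hb : -(r:ℤ) ≤ b ∧ b ≤ r) :
    |h a - h b| ≤ ∑ s ∈ Finset.Ico (-(r:ℤ)) (r:ℤ), |h (s+1) - h s| := by
  have key : ∀ u v : ℤ, u ≤ v → -(r:ℤ) ≤ u → v ≤ r →
      |h v - h u| ≤ ∑ s ∈ Finset.Ico (-(r:ℤ)) (r:ℤ), |h (s+1) - h s| := by
    intro u v huv hu hv
    refine le_trans (telescope_mono h u v huv) ?_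
    refine Finset.sum_le_sum_of_subset_of_nonneg ?_ (fun _ _ _ => abs_nonneg _)
    intro s hs
    simp only [Finset.mem_Ico] at hs ⊢
    omega
  rcases le_total a b with hab | hab
  · rw [abs_sub_comm]; exact key a b hab ha.1 hb.2
  · exact key b a hab hb.1 ha.2


/-- Intermediate point of the canonical path from `x` to `y`: coordinates `< k` from `y`. -/
def chain (x y : Zd d) (k : ℕ) : Zd d := fun j => if (j:ℕ) < k then y j else x j

lemma chain_mem_box {x y : Zd d} (hx : x ∈ box d r) (hy : y ∈ box d r) (k : ℕ) :
    chain x y k ∈ box d r := by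
  rw [mem_box_iff] at hx hy ⊢
  intro j
  unfold chain
  by_cases h : (j:ℕ) < k <;> simp [h, hx j, hy j]

lemma path_bound (f : Zd d → ℝ) {x y : Zd d} (hx : x ∈ box d r) (hy : y ∈ box d r) :
    |f x - f y| ≤ ∑ K : Fin d, ∑ s ∈ Finset.Ico (-(r:ℤ)) (r:ℤ),
      |f (eplus (Function.update (chain x y (K:ℕ)) K s, K))
        - f (Function.update (chain x y (K:ℕ)) K s)| := by
  have h0 : chain x y 0 = x := funext fun j => by simp [chain]
  have hdd : chain x y d = y := funext fun j => by simp [chain, j.isLt]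
  have tele : f x - f y = ∑ k ∈ Finset.range d, (f (chain x y k) - f (chain x y (k+1))) := by
    rw [Finset.sum_range_sub' (fun k => f (chain x y k)) d, h0, hdd]
  calc |f x - f y| ≤ ∑ k ∈ Finset.range d, |f (chain x y k) - f (chain x y (k+1))| := by
        rw [tele]; exact Finset.abs_sum_le_sum_abs _ _
    _ = ∑ K : Fin d, |f (chain x y (K:ℕ)) - f (chain x y ((K:ℕ)+1))| :=
        (Fin.sum_univ_eq_sum_range (fun k => |f (chain x y k) - f (chain x y (k+1))|) d).symm
    _ ≤ _ := by
        refine Finset.sum_le_sum fun K _ => ?_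
        set c := chain x y (K:ℕ) with hc
        have hck : f (chain x y (K:ℕ)) = f (Function.update c K (x K)) := by
          congr 1
          funext j
          rcases eq_or_ne j K with rfl | h
          · simp [hc, chain]
          · simp [Function.update_of_ne h, hc]
        have hck1 : f (chain x y ((K:ℕ)+1)) = f (Function.update c K (y K)) := by
          congr 1
          funext j
          rcases eq_or_ne j K with rfl | h
          · simp [hc, chain, Function.update_self]
          · have hjK : (j:ℕ) ≠ (K:ℕ) := fun hh => h (Fin.ext hh)
            have : ((j:ℕ) < (K:ℕ)+1) ↔ ((j:ℕ) < (K:ℕ)) := by omega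
            simp [Function.update_of_ne h, hc, chain, this]
        rw [hck, hck1]
        have hxK := (mem_box_iff.mp hx) K
        have hyK := (mem_box_iff.mp hy) K
        have := telescope (fun t => f (Function.update c K t)) (r := r) hxK hyK
        refine this.trans (le_of_eq (Finset.sum_congr rfl fun s _ => ?_))
        rw [eplus_update]

/-- The counting bound: fibers of the map `(x,y) ↦ update (chain x y K) K s` have
cardinality at most `(2r+1)^(d+1)`. -/
lemma fiber_card_le (K : Fin d) (s : ℤ) (z₀ : Zd d) :
    (((box d r) ×ˢ (box d r)).filter
        (fun p => Function.update (chain p.1 p.2 (K:ℕ)) K s = z₀)).card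
      ≤ (2*r+1)^(d+1) := by
  classical
  set N := 2*r+1
  set Sx : Finset (Zd d) := Fintype.piFinset
    (fun j => if (K:ℕ) < (j:ℕ) then {z₀ j} else Finset.Icc (-(r:ℤ)) (r:ℤ)) with hSx
  set Sy : Finset (Zd d) := Fintype.piFinset
    (fun j => if (j:ℕ) < (K:ℕ) then {z₀ j} else Finset.Icc (-(r:ℤ)) (r:ℤ)) with hSy
  have hsub : (((box d r) ×ˢ (box d r)).filter
      (fun p => Function.update (chain p.1 p.2 (K:ℕ)) K s = z₀)) ⊆ Sx ×ˢ Sy := by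
    intro p hp
    simp only [Finset.mem_filter, Finset.mem_product] at hp
    obtain ⟨⟨hx, hy⟩, hz⟩ := hp
    rw [mem_box_iff] at hx hy
    rw [Finset.mem_product]
    constructor
    · rw [hSx, Fintype.mem_piFinset]
      intro j
      by_cases h : (K:ℕ) < (j:ℕ)
      · have hjK : j ≠ K := fun hh => by simp [hh] at h
        have : z₀ j = p.1 j := by
          rw [← hz, Function.update_of_ne hjK]
          simp [chain, Nat.not_lt.mpr (le_of_lt h)]
        simp [h, this]
      · simp only [h, if_false, Finset.mem_Icc]
        exact ⟨(hx j).1, (hx j).2⟩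
    · rw [hSy, Fintype.mem_piFinset]
      intro j
      by_cases h : (j:ℕ) < (K:ℕ)
      · have hjK : j ≠ K := fun hh => by simp [hh] at h
        have : z₀ j = p.2 j := by
          rw [← hz, Function.update_of_ne hjK]
          simp [chain, h]
        simp [h, this]
      · simp only [h, if_false, Finset.mem_Icc]
        exact ⟨(hy j).1, (hy j).2⟩
  refine (Finset.card_le_card hsub).trans ?_
  rw [Finset.card_product]
  have hcx : Sx.card = ∏ j : Fin d, (if (K:ℕ) < (j:ℕ) then 1 else N) := by
    rw [hSx, Fintype.card_piFinset]
    refine Finset.prod_congr rfl fun j _ => ?_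
    by_cases h : (K:ℕ) < (j:ℕ)
    · simp [h]
    · simp [h, Int.card_Icc, N]; omega
  have hcy : Sy.card = ∏ j : Fin d, (if (j:ℕ) < (K:ℕ) then 1 else N) := by
    rw [hSy, Fintype.card_piFinset]
    refine Finset.prod_congr rfl fun j _ => ?_
    by_cases h : (j:ℕ) < (K:ℕ)
    · simp [h]
    · simp [h, Int.card_Icc, N]; omega
  rw [hcx, hcy, ← Finset.prod_mul_distrib]
  have hfac : ∀ j : Fin d,
      (if (K:ℕ) < (j:ℕ) then 1 else N) * (if (j:ℕ) < (K:ℕ) then 1 else N)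
        = (if j = K then N*N else N) := by
    intro j
    rcases eq_or_ne j K with rfl | h
    · simp
    · have hjK : (j:ℕ) ≠ (K:ℕ) := fun hh => h (Fin.ext hh)
      rcases lt_or_gt_of_ne hjK with hlt | hgt
      · simp [hlt, Nat.not_lt.mpr (le_of_lt hlt), h]
      · simp [hgt, Nat.not_lt.mpr (le_of_lt hgt), h]
  rw [Finset.prod_congr rfl (fun j _ => hfac j),
    ← Finset.mul_prod_erase Finset.univ _ (Finset.mem_univ K)]
  have herase : ∏ j ∈ Finset.univ.erase K, (if j = K then N*N else N) = N^(d-1) := by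
    rw [Finset.prod_congr rfl (fun j hj => if_neg (Finset.ne_of_mem_erase hj)),
      Finset.prod_const]
    congr 1
    rw [Finset.card_erase_of_mem (Finset.mem_univ K)]
    simp
  rw [herase]
  have hd1 : 1 ≤ d := Nat.one_le_iff_ne_zero.mpr (by rintro rfl; exact K.elim0)
  have hKK : (if K = K then N*N else N) = N*N := if_pos rfl
  rw [hKK]
  have heq : N*N*N^(d-1) = N^(d+1) := by
    rw [mul_assoc, ← pow_succ', ← pow_succ']
    congr 1
    omega
  rw [heq]


lemma eplus_coord (z : Zd d) (K j : Fin d) :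
    eplus (z, K) j = if j = K then z j + 1 else z j := by
  rcases eq_or_ne j K with rfl | h
  · simp [eplus]
  · simp [eplus, h, Pi.single_eq_of_ne h]

lemma eplus_mem_box {z : Zd d} (hz : z ∈ box d r) (K : Fin d)
    (hK : z K < (r:ℤ)) : eplus (z, K) ∈ box d r := by
  rw [mem_box_iff] at hz ⊢
  intro j
  rw [eplus_coord]
  obtain ⟨ha, hb⟩ := hz j
  rcases eq_or_ne j K with rfl | h
  · simp only [eq_self_iff_true, if_true]
    omega
  · simp only [if_neg h]
    exact ⟨ha, hb⟩

lemma poincare (f : Zd d → ℝ) :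
    ∑ x ∈ box d r, |f x - avg d r f|
      ≤ ((2*r+1 : ℕ) : ℝ) * ∑ e ∈ edgeBox d r, |f (eplus e) - f e.1| := by
  classical
  set B := box d r with hB
  set N : ℕ := 2*r+1 with hN
  have hNdpos : 0 < (B.card : ℝ) := by
    rw [hB, card_box]
    positivity
  -- Step 1: pointwise bound by the double sum
  have step1 : ∀ x ∈ B, |f x - avg d r f| ≤ (B.card : ℝ)⁻¹ * ∑ y ∈ B, |f x - f y| := by
    intro x _
    have havg : f x - avg d r f = (∑ y ∈ B, (f x - f y)) / (B.card : ℝ) := by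
      rw [avg, Finset.sum_sub_distrib, Finset.sum_const, nsmul_eq_mul]
      field_simp
      simp only [hB]
      rw [sub_mul, div_mul_cancel₀ _ (show ((box d r).card : ℝ) ≠ 0 by rw [card_box]; positivity)]
    rw [havg, abs_div, abs_of_pos hNdpos, div_eq_inv_mul]
    gcongr
    exact Finset.abs_sum_le_sum_abs _ _
  have step1' : ∑ x ∈ B, |f x - avg d r f|
      ≤ (B.card : ℝ)⁻¹ * ∑ p ∈ B ×ˢ B, |f p.1 - f p.2| := by
    calc ∑ x ∈ B, |f x - avg d r f|
        ≤ ∑ x ∈ B, ((B.card : ℝ)⁻¹ * ∑ y ∈ B, |f x - f y|) := Finset.sum_le_sum step1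
      _ = (B.card : ℝ)⁻¹ * ∑ p ∈ B ×ˢ B, |f p.1 - f p.2| := by
          rw [← Finset.mul_sum, Finset.sum_product]
  -- Step 2: the double sum via canonical paths
  have step2 : ∑ p ∈ B ×ˢ B, |f p.1 - f p.2|
      ≤ ∑ K : Fin d, ∑ s ∈ Finset.Ico (-(r:ℤ)) (r:ℤ), ∑ p ∈ B ×ˢ B,
          |f (eplus (Function.update (chain p.1 p.2 (K:ℕ)) K s, K))
            - f (Function.update (chain p.1 p.2 (K:ℕ)) K s)| := by
    calc ∑ p ∈ B ×ˢ B, |f p.1 - f p.2|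
        ≤ ∑ p ∈ B ×ˢ B, ∑ K : Fin d, ∑ s ∈ Finset.Ico (-(r:ℤ)) (r:ℤ),
            |f (eplus (Function.update (chain p.1 p.2 (K:ℕ)) K s, K))
              - f (Function.update (chain p.1 p.2 (K:ℕ)) K s)| := by
          refine Finset.sum_le_sum fun p hp => ?_
          rw [Finset.mem_product] at hp
          exact path_bound f hp.1 hp.2
      _ = ∑ K : Fin d, ∑ p ∈ B ×ˢ B, ∑ s ∈ Finset.Ico (-(r:ℤ)) (r:ℤ), _ := Finset.sum_comm
      _ = _ := Finset.sum_congr rfl (fun K _ => Finset.sum_comm)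
  -- Step 3: counting bound for fixed direction and height
  have step3 : ∀ (K : Fin d), ∀ s ∈ Finset.Ico (-(r:ℤ)) (r:ℤ),
      ∑ p ∈ B ×ˢ B, |f (eplus (Function.update (chain p.1 p.2 (K:ℕ)) K s, K))
          - f (Function.update (chain p.1 p.2 (K:ℕ)) K s)|
        ≤ (N^(d+1) : ℕ) * ∑ z ∈ B.filter (fun z => z K = s),
            |f (eplus (z, K)) - f z| := by
    intro K s hs
    rw [Finset.mem_Ico] at hs
    set φ : Zd d → ℝ := fun z => |f (eplus (z, K)) - f z| with hφ
    set zmap : Zd d × Zd d → Zd d :=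
      fun p => Function.update (chain p.1 p.2 (K:ℕ)) K s with hzmap
    have hmaps : ∀ p ∈ B ×ˢ B, zmap p ∈ (B ×ˢ B).image zmap :=
      fun p hp => Finset.mem_image_of_mem _ hp
    rw [← Finset.sum_fiberwise_of_maps_to hmaps (fun p => φ (zmap p))]
    have inner : ∀ z₀ ∈ (B ×ˢ B).image zmap,
        ∑ p ∈ (B ×ˢ B).filter (fun p => zmap p = z₀), φ (zmap p)
          ≤ (N^(d+1) : ℕ) * φ z₀ := by
      intro z₀ _
      have : ∀ p ∈ (B ×ˢ B).filter (fun p => zmap p = z₀), φ (zmap p) = φ z₀ := by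
        intro p hp
        rw [(Finset.mem_filter.mp hp).2]
      rw [Finset.sum_congr rfl this, Finset.sum_const, nsmul_eq_mul]
      have hcard := fiber_card_le (r := r) K s z₀
      have hφ0 : 0 ≤ φ z₀ := abs_nonneg _
      gcongr
    refine (Finset.sum_le_sum inner).trans ?_
    rw [← Finset.mul_sum]
    have hsub : (B ×ˢ B).image zmap ⊆ B.filter (fun z => z K = s) := by
      intro z₀ hz₀
      rw [Finset.mem_image] at hz₀
      obtain ⟨p, hp, rfl⟩ := hz₀
      rw [Finset.mem_product] at hp
      rw [Finset.mem_filter]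
      constructor
      · exact update_mem_box (chain_mem_box hp.1 hp.2 _) K ⟨hs.1, by omega⟩
      · simp [hzmap]
    exact mul_le_mul_of_nonneg_left
      (Finset.sum_le_sum_of_subset_of_nonneg hsub (fun _ _ _ => abs_nonneg _))
      (by positivity)
  -- Step 4-5: collapse heights into directed edge sums
  have step45 : ∀ K : Fin d,
      ∑ s ∈ Finset.Ico (-(r:ℤ)) (r:ℤ), ∑ z ∈ B.filter (fun z => z K = s),
          |f (eplus (z, K)) - f z|
        ≤ ∑ z ∈ B.filter (fun z => eplus (z, K) ∈ B), |f (eplus (z, K)) - f z| := by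
    intro K
    set T := B.filter (fun z => z K ∈ Finset.Ico (-(r:ℤ)) (r:ℤ)) with hT
    have hmaps : ∀ z ∈ T, z K ∈ Finset.Ico (-(r:ℤ)) (r:ℤ) := by
      intro z hz
      exact (Finset.mem_filter.mp hz).2
    have hfib := Finset.sum_fiberwise_of_maps_to hmaps (fun z => |f (eplus (z, K)) - f z|)
    have hflt : ∀ s ∈ Finset.Ico (-(r:ℤ)) (r:ℤ),
        B.filter (fun z => z K = s) = T.filter (fun z => z K = s) := by
      intro s hs
      ext z
      simp only [hT, Finset.mem_filter, Finset.filter_filter]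
      constructor
      · rintro ⟨h1, h2⟩; exact ⟨h1, by rw [h2]; exact hs, h2⟩
      · rintro ⟨h1, _, h3⟩; exact ⟨h1, h3⟩
    rw [Finset.sum_congr rfl (fun s hs => by rw [hflt s hs]), hfib]
    refine Finset.sum_le_sum_of_subset_of_nonneg ?_ (fun _ _ _ => abs_nonneg _)
    intro z hz
    rw [hT, Finset.mem_filter] at hz
    rw [Finset.mem_filter]
    obtain ⟨h1, h2⟩ := hz
    rw [Finset.mem_Ico] at h2
    exact ⟨h1, eplus_mem_box h1 K h2.2⟩
  -- Step 6: directed edge sums assemble to the edge sum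
  have step6 : ∑ K : Fin d, ∑ z ∈ B.filter (fun z => eplus (z, K) ∈ B),
        |f (eplus (z, K)) - f z|
      = ∑ e ∈ edgeBox d r, |f (eplus e) - f e.1| := by
    rw [edgeBox, Finset.sum_filter, Finset.sum_product]
    rw [Finset.sum_comm]
    refine Finset.sum_congr rfl fun K _ => ?_
    rw [Finset.sum_filter]
  -- assemble
  have hchain : ∑ x ∈ B, |f x - avg d r f|
      ≤ (B.card : ℝ)⁻¹ * ((N^(d+1) : ℕ) * ∑ e ∈ edgeBox d r, |f (eplus e) - f e.1|) := by
    refine step1'.trans ?_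
    gcongr
    refine step2.trans ?_
    calc ∑ K : Fin d, ∑ s ∈ Finset.Ico (-(r:ℤ)) (r:ℤ), ∑ p ∈ B ×ˢ B, _
        ≤ ∑ K : Fin d, ∑ s ∈ Finset.Ico (-(r:ℤ)) (r:ℤ),
            ((N^(d+1) : ℕ) * ∑ z ∈ B.filter (fun z => z K = s),
              |f (eplus (z, K)) - f z|) :=
          Finset.sum_le_sum fun K _ => Finset.sum_le_sum fun s hs => step3 K s hs
      _ = (N^(d+1) : ℕ) * ∑ K : Fin d, ∑ s ∈ Finset.Ico (-(r:ℤ)) (r:ℤ),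
            ∑ z ∈ B.filter (fun z => z K = s), |f (eplus (z, K)) - f z| := by
          rw [Finset.mul_sum]
          exact Finset.sum_congr rfl fun K _ => (Finset.mul_sum _ _ _).symm
      _ ≤ (N^(d+1) : ℕ) * ∑ K : Fin d, ∑ z ∈ B.filter (fun z => eplus (z, K) ∈ B),
            |f (eplus (z, K)) - f z| := by
          exact mul_le_mul_of_nonneg_left
            (Finset.sum_le_sum fun K _ => step45 K) (by positivity)
      _ = (N^(d+1) : ℕ) * ∑ e ∈ edgeBox d r, |f (eplus e) - f e.1| := by rw [step6]
  refine hchain.trans (le_of_eq ?_)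
  rw [← mul_assoc]
  congr 1
  rw [hB, card_box]
  push_cast
  rw [pow_succ]
  have hNne : ((2*r+1 : ℕ) : ℝ) ≠ 0 := by positivity
  field_simp
  rw [hN]; push_cast; ring


lemma sum_edgeBox {M : Type*} [AddCommMonoid M] (h : Edge d → M) :
    ∑ K : Fin d, ∑ z ∈ (box d r).filter (fun z => eplus (z, K) ∈ box d r), h (z, K)
      = ∑ e ∈ edgeBox d r, h e := by
  rw [edgeBox, Finset.sum_filter, Finset.sum_product, Finset.sum_comm]
  refine Finset.sum_congr rfl fun K _ => ?_
  rw [Finset.sum_filter]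

theorem isoperimetric_box'
    (d : ℕ) (hd : 2 ≤ d) :
    ∃ C : ℝ, 0 ≤ C ∧ ∀ r : ℕ, 1 ≤ r → ∀ f : Zd d → ℝ,
      boxLp d r ((d : ℝ) / ((d : ℝ) - 1)) (fun x => f x - avg d r f)
        ≤ C * gradLp d r 1 f := by
  classical
  refine ⟨2, by norm_num, ?_⟩
  intro r _ f
  set p : ℝ := (d:ℝ)/((d:ℝ)-1) with hp
  have hd1 : (1:ℝ) < (d:ℝ) := by exact_mod_cast Nat.lt_of_lt_of_le one_lt_two hd
  have hdm1 : (0:ℝ) < (d:ℝ) - 1 := by linarith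
  have hp0 : 0 < p := div_pos (by linarith) hdm1
  set g : Zd d → ℝ := fun x => f x - avg d r f with hg
  set R : ℝ := ∑ e ∈ edgeBox d r, |f (eplus e) - f e.1| with hR
  have hR0 : 0 ≤ R := Finset.sum_nonneg fun _ _ => abs_nonneg _
  set N : ℕ := 2*r+1 with hN
  have hNne : ((N:ℝ≥0∞)) ≠ 0 := by
    simp [hN]
  have hNtop : ((N:ℝ≥0∞)) ≠ ⊤ := ENNReal.natCast_ne_top N
  set G : Zd d → ℝ≥0∞ := fun z => if z ∈ box d r then ENNReal.ofReal |g z| else 0 with hG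
  set D : Fin d → Zd d → ℝ≥0∞ := fun K z =>
    if z ∈ box d r ∧ eplus (z, K) ∈ box d r
    then ENNReal.ofReal |f (eplus (z, K)) - f z| else 0 with hD
  set F : Zd d → ℝ≥0∞ := fun z => ((N:ℝ≥0∞))⁻¹ * G z + ∑ K : Fin d, D K z with hF
  have hcard : (Finset.Icc (-(r:ℤ)) (r:ℤ)).card = N := by
    rw [Int.card_Icc]; omega
  -- pointwise estimate
  have pointwise : ∀ x ∈ box d r, ∀ K : Fin d,
      ENNReal.ofReal |g x| ≤ ∑' t : ℤ, F (Function.update x K t) := by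
    intro x hx K
    have hxc := mem_box_iff.mp hx
    set L : ℝ≥0∞ := ∑ s ∈ Finset.Icc (-(r:ℤ)) (r:ℤ), D K (Function.update x K s) with hL
    have key : ∀ t ∈ Finset.Icc (-(r:ℤ)) (r:ℤ),
        ENNReal.ofReal |g x| ≤ G (Function.update x K t) + L := by
      intro t ht
      rw [Finset.mem_Icc] at ht
      have hreal : |g x| ≤ |g (Function.update x K t)|
          + ∑ s ∈ Finset.Ico (-(r:ℤ)) (r:ℤ),
              |f (Function.update x K (s+1)) - f (Function.update x K s)| := by
        have htel := telescope (fun u => f (Function.update x K u)) (r := r) (hxc K) ht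
        simp only [Function.update_eq_self] at htel
        have hgd : |g x - g (Function.update x K t)|
            = |f x - f (Function.update x K t)| := by
          simp only [hg]
          ring_nf
        have habs : |g x| ≤ |g (Function.update x K t)| + |g x - g (Function.update x K t)| := by
          have := abs_sub_abs_le_abs_sub (g x) (g (Function.update x K t))
          linarith [abs_nonneg (g x - g (Function.update x K t))]
        rw [hgd] at habs
        exact habs.trans (by linarith)
      have h1 : ENNReal.ofReal |g x| ≤ ENNReal.ofReal |g (Function.update x K t)|
          + ENNReal.ofReal (∑ s ∈ Finset.Ico (-(r:ℤ)) (r:ℤ),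
              |f (Function.update x K (s+1)) - f (Function.update x K s)|) :=
        (ENNReal.ofReal_le_ofReal hreal).trans ENNReal.ofReal_add_le
      refine h1.trans ?_
      have hupd : Function.update x K t ∈ box d r := update_mem_box hx K ht
      have e1 : ENNReal.ofReal |g (Function.update x K t)| = G (Function.update x K t) := by
        rw [hG]; simp only [if_pos hupd]
      have e2 : ENNReal.ofReal (∑ s ∈ Finset.Ico (-(r:ℤ)) (r:ℤ),
          |f (Function.update x K (s+1)) - f (Function.update x K s)|) ≤ L := by
        rw [ENNReal.ofReal_sum_of_nonneg (fun _ _ => abs_nonneg _)]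
        have e3 : ∀ s ∈ Finset.Ico (-(r:ℤ)) (r:ℤ),
            ENNReal.ofReal |f (Function.update x K (s+1)) - f (Function.update x K s)|
              = D K (Function.update x K s) := by
          intro s hs
          rw [Finset.mem_Ico] at hs
          have hm1 : Function.update x K s ∈ box d r := update_mem_box hx K ⟨hs.1, by omega⟩
          have hm2 : eplus (Function.update x K s, K) ∈ box d r := by
            rw [eplus_update]
            exact update_mem_box hx K ⟨by omega, by omega⟩
          rw [hD]
          simp only [if_pos (And.intro hm1 hm2)]
          rw [eplus_update]
        rw [Finset.sum_congr rfl e3, hL]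
        refine Finset.sum_le_sum_of_subset ?_
        intro s hs
        rw [Finset.mem_Ico] at hs
        rw [Finset.mem_Icc]
        omega
      rw [e1]
      exact add_le_add le_rfl e2
    have hsum : (N:ℝ≥0∞) * ENNReal.ofReal |g x|
        ≤ (∑ t ∈ Finset.Icc (-(r:ℤ)) (r:ℤ), G (Function.update x K t)) + (N:ℝ≥0∞) * L := by
      calc (N:ℝ≥0∞) * ENNReal.ofReal |g x|
          = ∑ _t ∈ Finset.Icc (-(r:ℤ)) (r:ℤ), ENNReal.ofReal |g x| := by
            rw [Finset.sum_const, hcard, nsmul_eq_mul]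
        _ ≤ ∑ t ∈ Finset.Icc (-(r:ℤ)) (r:ℤ), (G (Function.update x K t) + L) :=
            Finset.sum_le_sum key
        _ = (∑ t ∈ Finset.Icc (-(r:ℤ)) (r:ℤ), G (Function.update x K t)) + (N:ℝ≥0∞) * L := by
            rw [Finset.sum_add_distrib, Finset.sum_const, hcard, nsmul_eq_mul]
    have hdiv : ENNReal.ofReal |g x|
        ≤ ((N:ℝ≥0∞))⁻¹ * (∑ t ∈ Finset.Icc (-(r:ℤ)) (r:ℤ), G (Function.update x K t)) + L := by
      have h2 := mul_le_mul_right hsum ((N:ℝ≥0∞))⁻¹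
      rw [← mul_assoc, ENNReal.inv_mul_cancel hNne hNtop, one_mul, mul_add, ← mul_assoc,
        ENNReal.inv_mul_cancel hNne hNtop, one_mul] at h2
      exact h2
    refine hdiv.trans ?_
    have hle : ((N:ℝ≥0∞))⁻¹ * (∑ t ∈ Finset.Icc (-(r:ℤ)) (r:ℤ), G (Function.update x K t)) + L
        ≤ ∑ t ∈ Finset.Icc (-(r:ℤ)) (r:ℤ), F (Function.update x K t) := by
      simp only [hF]
      rw [Finset.sum_add_distrib, ← Finset.mul_sum]
      refine add_le_add le_rfl ?_
      rw [hL]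
      refine Finset.sum_le_sum fun t _ => ?_
      exact Finset.single_le_sum (f := fun K' => D K' (Function.update x K t))
        (fun _ _ => zero_le) (Finset.mem_univ K)
    exact hle.trans (ENNReal.sum_le_tsum _)
  -- product bound and grid lemma
  have key2 : ∀ x ∈ box d r, ENNReal.ofReal (|g x| ^ p)
      ≤ ∏ K : Fin d, (∑' t : ℤ, F (Function.update x K t)) ^ ((1:ℝ)/((d:ℝ)-1)) := by
    intro x hx
    have h1 : ENNReal.ofReal (|g x| ^ p) = (ENNReal.ofReal |g x|) ^ p :=
      (ENNReal.ofReal_rpow_of_nonneg (abs_nonneg _) hp0.le).symm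
    have h2 : (ENNReal.ofReal |g x|) ^ p
        = ∏ _K : Fin d, (ENNReal.ofReal |g x|) ^ ((1:ℝ)/((d:ℝ)-1)) := by
      rw [Finset.prod_const, Finset.card_univ, Fintype.card_fin,
        ← ENNReal.rpow_natCast ((ENNReal.ofReal |g x|) ^ ((1:ℝ)/((d:ℝ)-1))) d,
        ← ENNReal.rpow_mul]
      congr 1
      rw [hp]
      field_simp
    rw [h1, h2]
    exact Finset.prod_le_prod' fun K _ =>
      ENNReal.rpow_le_rpow (pointwise x hx K) (by positivity)
  have lhs_le : ENNReal.ofReal (∑ x ∈ box d r, |g x| ^ p) ≤ (∑' z, F z) ^ p := by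
    rw [ENNReal.ofReal_sum_of_nonneg (fun x _ => Real.rpow_nonneg (abs_nonneg _) p)]
    calc ∑ x ∈ box d r, ENNReal.ofReal (|g x| ^ p)
        ≤ ∑ x ∈ box d r, ∏ K : Fin d,
            (∑' t : ℤ, F (Function.update x K t)) ^ ((1:ℝ)/((d:ℝ)-1)) :=
          Finset.sum_le_sum key2
      _ ≤ ∑' x : Zd d, ∏ K : Fin d,
            (∑' t : ℤ, F (Function.update x K t)) ^ ((1:ℝ)/((d:ℝ)-1)) :=
          ENNReal.sum_le_tsum _
      _ ≤ (∑' z, F z) ^ p := by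
          rw [hp]
          exact grid_discrete hd F
  -- mass bound
  have hGsum : ∑' z, G z = ENNReal.ofReal (∑ x ∈ box d r, |g x|) := by
    rw [tsum_eq_sum (s := box d r) (fun z hz => by rw [hG]; simp only [if_neg hz]),
      ENNReal.ofReal_sum_of_nonneg (fun _ _ => abs_nonneg _)]
    exact Finset.sum_congr rfl fun z hz => by rw [hG]; simp only [if_pos hz]
  have hDsum : ∀ K : Fin d, ∑' z, D K z
      = ∑ z ∈ (box d r).filter (fun z => eplus (z, K) ∈ box d r),
          ENNReal.ofReal |f (eplus (z, K)) - f z| := by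
    intro K
    rw [tsum_eq_sum (s := (box d r).filter (fun z => eplus (z, K) ∈ box d r))
      (fun z hz => by
        rw [hD]
        refine if_neg fun hc => hz ?_
        rw [Finset.mem_filter]
        exact hc)]
    refine Finset.sum_congr rfl fun z hz => ?_
    rw [Finset.mem_filter] at hz
    rw [hD]
    simp only [if_pos hz]
  have hmass : ∑' z, F z ≤ ENNReal.ofReal (2 * R) := by
    have h1 : ∑' z, F z = ((N:ℝ≥0∞))⁻¹ * (∑' z, G z) + ∑ K : Fin d, ∑' z, D K z := by
      simp only [hF]
      rw [ENNReal.tsum_add, ENNReal.tsum_mul_left]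
      congr 1
      exact Summable.tsum_finsetSum (fun K _ => ENNReal.summable)
    have h2 : ∑ K : Fin d, ∑' z, D K z = ENNReal.ofReal R := by
      rw [Finset.sum_congr rfl (fun K _ => hDsum K),
        sum_edgeBox (fun e => ENNReal.ofReal |f (eplus e) - f e.1|), hR,
        ENNReal.ofReal_sum_of_nonneg (fun _ _ => abs_nonneg _)]
    have h3 : ((N:ℝ≥0∞))⁻¹ * (∑' z, G z) ≤ ENNReal.ofReal R := by
      rw [hGsum]
      have hp1 := poincare (d := d) (r := r) f
      have : ENNReal.ofReal (∑ x ∈ box d r, |f x - avg d r f|)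
          ≤ ENNReal.ofReal (((2*r+1 : ℕ):ℝ) * R) := ENNReal.ofReal_le_ofReal (by
            rw [hR]
            exact hp1)
      refine (mul_le_mul_right this _).trans ?_
      rw [ENNReal.ofReal_mul (by positivity), ENNReal.ofReal_natCast, ← hN, ← mul_assoc,
        ENNReal.inv_mul_cancel hNne hNtop, one_mul]
    rw [h1, h2]
    calc ((N:ℝ≥0∞))⁻¹ * (∑' z, G z) + ENNReal.ofReal R
        ≤ ENNReal.ofReal R + ENNReal.ofReal R := add_le_add h3 le_rfl
      _ = ENNReal.ofReal (2 * R) := by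
          rw [← ENNReal.ofReal_add hR0 hR0, two_mul]
  -- conclude in ℝ
  have hfinal : ∑ x ∈ box d r, |g x| ^ p ≤ (2 * R) ^ p := by
    have h4 : ENNReal.ofReal (∑ x ∈ box d r, |g x| ^ p) ≤ ENNReal.ofReal ((2*R) ^ p) := by
      refine lhs_le.trans ?_
      rw [← ENNReal.ofReal_rpow_of_nonneg (by positivity) hp0.le]
      exact ENNReal.rpow_le_rpow hmass hp0.le
    exact (ENNReal.ofReal_le_ofReal_iff (by positivity)).mp h4
  have hglp : gradLp d r 1 f = R := by
    rw [gradLp, hR]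
    norm_num
  have hblp : boxLp d r p g ≤ 2 * R := by
    rw [boxLp]
    calc (∑ x ∈ box d r, |g x| ^ p) ^ (1/p)
        ≤ ((2*R) ^ p) ^ (1/p) :=
          Real.rpow_le_rpow (Finset.sum_nonneg fun x _ => Real.rpow_nonneg (abs_nonneg _) p)
            hfinal (by positivity)
      _ = 2 * R := by
          rw [← Real.rpow_mul (by positivity), mul_one_div_cancel hp0.ne', Real.rpow_one]
  rw [hglp]
  exact hblp

end AnchoredNash

namespace AnchoredNash
/-- Discrete isoperimetric (critical Sobolev) inequality on boxes
(Theorem 2.7). -/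
theorem isoperimetric_box
    (d : ℕ) (hd : 2 ≤ d) :
    ∃ C : ℝ, 0 ≤ C ∧ ∀ r : ℕ, 1 ≤ r → ∀ f : Zd d → ℝ,
      boxLp d r ((d : ℝ) / ((d : ℝ) - 1)) (fun x => f x - avg d r f)
        ≤ C * gradLp d r 1 f :=
  isoperimetric_box' d hd

end AnchoredNash
end
end

section
/- Sobolev inequality for functions vanishing on half the box (key step in the proof of Theorem 2.7): Let d ≥ 2 and p* = d/(d−1). There exists a constant C < ∞, depending only on d, such that for every positive integer r and every function g : B_r → [0,∞) satisfying |{x ∈ B_r : g(x) = 0}| ≥ |B_r|/2, one has ‖g‖_{L^{p*}(B_r)} ≤ C ‖∇g‖_{L^1(𝔹_r)}. -/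
open scoped ENNReal NNReal
open Set MeasureTheory

noncomputable section

open Finset MeasureTheory
open scoped ENNReal

set_option linter.unusedSectionVars false
set_option maxHeartbeats 1000000

namespace LWAux

variable {ι : Type*} [Fintype ι] [DecidableEq ι]

/-- Keep coordinates in `s`, zero the others. -/
def pr (s : Finset ι) (x : ι → ℤ) : ι → ℤ := fun i => if i ∈ s then x i else 0

lemma pr_pr {s u : Finset ι} (h : s ⊆ u) (x : ι → ℤ) : pr s (pr u x) = pr s x := by
  funext i; by_cases hi : i ∈ s <;> simp [pr, hi, h]
  · intro hu; exact absurd (h hi) hu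

lemma apply_eq_zero_of_mem_image_pr {A : Finset (ι → ℤ)} {s : Finset ι} {x : ι → ℤ}
    (hx : x ∈ A.image (pr s)) {w : ι} (hw : w ∉ s) : x w = 0 := by
  obtain ⟨y, -, rfl⟩ := Finset.mem_image.1 hx
  simp [pr, hw]

lemma lw_aux (s : Finset ι) : ∀ A : Finset (ι → ℤ), A.Nonempty →
    ((A.image (pr s)).card : ℝ≥0∞) ^ s.card ≤
      ((A.image (pr s)).card : ℝ≥0∞) *
        ∏ i ∈ s, (((A.image (pr (s.erase i))).card : ℝ≥0∞)) := by
  induction s using Finset.induction with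
  | empty =>
    intro A hA
    have : (A.image (pr (∅ : Finset ι))).Nonempty := hA.image _
    simp only [Finset.card_empty, pow_zero, Finset.prod_empty, mul_one]
    exact_mod_cast Nat.one_le_cast.2 (Finset.card_pos.2 this)
  | @insert j s hj ih =>
    intro A hA
    rcases s.eq_empty_or_nonempty with rfl | hs
    · -- singleton case
      have h1 : (A.image (pr ((insert j ∅ : Finset ι).erase j))).Nonempty := hA.image _
      simp only [Finset.card_insert_of_notMem hj, Finset.card_empty, zero_add, pow_one,
        Finset.prod_insert hj, Finset.prod_empty, mul_one, Finset.erase_insert hj]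
      exact le_mul_of_one_le_right zero_le
        (by exact_mod_cast Nat.one_le_cast.2 (Finset.card_pos.2 (hA.image _)))
    · -- main inductive step
      set s' : Finset ι := insert j s with hs'
      set B : Finset (ι → ℤ) := A.image (pr s') with hB
      set T : Finset ℤ := B.image (fun x => x j) with hT
      have hjs' : j ∈ s' := Finset.mem_insert_self _ _
      have hss' : s ⊆ s' := Finset.subset_insert _ _
      set k : ℕ := s.card with hk
      have hk1 : 1 ≤ k := Finset.card_pos.2 hs
      have hkR : (0:ℝ) < (k:ℝ) := by exact_mod_cast hk1
      -- fiber data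
      set Afib : ℤ → Finset (ι → ℤ) := fun t => B.filter (fun x => x j = t) with hAfib
      set m : ι → ℤ → ℕ := fun i t => ((Afib t).image (pr (s.erase i))).card with hm
      set a : ℕ := (A.image (pr s)).card with ha
      set c : ι → ℕ := fun i => (A.image (pr (s'.erase i))).card with hc
      -- (L1)
      have hL1 : B.card = ∑ t ∈ T, (Afib t).card :=
        Finset.card_eq_sum_card_fiberwise (fun x hx => Finset.mem_image_of_mem _ hx)
      -- key per-fiber bound
      have hfiber : ∀ t : ℤ, ((Afib t).card : ℝ≥0∞) ^ k ≤ (a : ℝ≥0∞) * ∏ i ∈ s, (m i t : ℝ≥0∞) := by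
        intro t
        rcases (Afib t).eq_empty_or_nonempty with he | hne
        · have : k ≠ 0 := by omega
          simp [he, zero_pow this]
        · -- proj s injective on the fiber
          have hinj : Set.InjOn (pr s) (Afib t) := by
            intro x hx y hy hxy
            simp only [Finset.mem_coe, hAfib, Finset.mem_filter] at hx hy
            funext w
            by_cases hw : w ∈ s
            · have := congrFun hxy w
              simpa [pr, hw] using this
            · by_cases hwj : w = j
              · subst hwj; rw [hx.2, hy.2]
              · have hws' : w ∉ s' := by simp [hs', Finset.mem_insert, hwj, hw]
                rw [apply_eq_zero_of_mem_image_pr hx.1 hws',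
                  apply_eq_zero_of_mem_image_pr hy.1 hws']
          have hcard : (Afib t).card = ((Afib t).image (pr s)).card :=
            (Finset.card_image_of_injOn hinj).symm
          have hsub : (Afib t).image (pr s) ⊆ A.image (pr s) := by
            intro x hx
            obtain ⟨y, hy, rfl⟩ := Finset.mem_image.1 hx
            have hyB : y ∈ B := (Finset.mem_filter.1 hy).1
            obtain ⟨z, hz, rfl⟩ := Finset.mem_image.1 hyB
            rw [pr_pr hss']
            exact Finset.mem_image_of_mem _ hz
          have hIH := ih (Afib t) hne
          calc ((Afib t).card : ℝ≥0∞) ^ k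
              = (((Afib t).image (pr s)).card : ℝ≥0∞) ^ k := by rw [hcard]
            _ ≤ (((Afib t).image (pr s)).card : ℝ≥0∞) *
                  ∏ i ∈ s, ((((Afib t).image (pr (s.erase i))).card : ℝ≥0∞)) := hIH
            _ ≤ (a : ℝ≥0∞) * ∏ i ∈ s, (m i t : ℝ≥0∞) := by
                have : (((Afib t).image (pr s)).card : ℝ≥0∞) ≤ (a : ℝ≥0∞) :=
                  Nat.cast_le.2 (Finset.card_le_card hsub)
                exact mul_le_mul' this le_rfl
      -- vanishing off T
      have hbzero : ∀ t ∉ T, (Afib t) = ∅ := by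
        intro t ht
        rw [Finset.filter_eq_empty_iff]
        intro x hx hxt
        exact ht (by rw [hT, ← hxt]; exact Finset.mem_image_of_mem _ hx)
      have hmzero : ∀ i, ∀ t ∉ T, m i t = 0 := by
        intro i t ht; simp [hm, hbzero t ht]
      have hk0 : (1/(k:ℝ)) ≠ 0 := by positivity
      have hk0' : (0:ℝ) ≤ 1/(k:ℝ) := by positivity
      have hk0'' : (0:ℝ) < 1/(k:ℝ) := by positivity
      -- per-fiber rpow bound
      have hfib' : ∀ t, ((Afib t).card : ℝ≥0∞) ≤
          ((a:ℝ≥0∞)) ^ (1/(k:ℝ)) * ∏ i ∈ s, ((m i t : ℝ≥0∞)) ^ (1/(k:ℝ)) := by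
        intro t
        have h1 : ((Afib t).card : ℝ≥0∞) = (((Afib t).card : ℝ≥0∞) ^ (k:ℝ)) ^ (1/(k:ℝ)) := by
          rw [← ENNReal.rpow_mul, mul_one_div, div_self hkR.ne', ENNReal.rpow_one]
        rw [h1]
        have h2 : (((Afib t).card : ℝ≥0∞) ^ (k:ℝ)) ^ (1/(k:ℝ)) ≤
            ((a : ℝ≥0∞) * ∏ i ∈ s, (m i t : ℝ≥0∞)) ^ (1/(k:ℝ)) := by
          apply ENNReal.rpow_le_rpow _ hk0'
          rw [ENNReal.rpow_natCast]
          exact hfiber t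
        refine h2.trans_eq ?_
        rw [ENNReal.mul_rpow_of_nonneg _ _ hk0', ← ENNReal.prod_rpow_of_nonneg hk0']
      -- Hölder
      have hHolder : ∑' t : ℤ, ∏ i ∈ s, ((m i t : ℝ≥0∞)) ^ (1/(k:ℝ)) ≤
          ∏ i ∈ s, (∑' t : ℤ, ((m i t : ℝ≥0∞))) ^ (1/(k:ℝ)) := by
        have hmeas : ∀ i ∈ s, AEMeasurable (fun t : ℤ => ((m i t : ℝ≥0∞))) (Measure.count) :=
          fun i _ => (measurable_of_countable _).aemeasurable
        have hp : ∑ i ∈ s, (1/(k:ℝ)) = 1 := by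
          rw [Finset.sum_const, ← hk, nsmul_eq_mul]
          field_simp
        have := ENNReal.lintegral_prod_norm_pow_le (μ := (Measure.count : Measure ℤ)) s
          hmeas hp (fun i _ => hk0')
        simpa only [MeasureTheory.lintegral_count] using this
      -- (L4)
      have hL4 : ∀ i ∈ s, ∑ t ∈ T, m i t ≤ c i := by
        intro i hi
        have hij : j ≠ i := by rintro rfl; exact hj hi
        have hjsi : j ∉ s.erase i := fun h => hj (Finset.mem_of_mem_erase h)
        set F : ℤ → Finset (ι → ℤ) :=
          fun t => ((Afib t).image (pr (s.erase i))).image (fun z => Function.update z j t)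
          with hF
        have hevalj : ∀ t, ∀ x ∈ F t, x j = t := by
          intro t x hx
          obtain ⟨z, -, rfl⟩ := Finset.mem_image.1 hx
          simp
        have hdisj : ∀ t₁ ∈ T, ∀ t₂ ∈ T, t₁ ≠ t₂ → Disjoint (F t₁) (F t₂) := by
          intro t₁ _ t₂ _ hne
          refine Finset.disjoint_left.2 fun x hx1 hx2 => ?_
          exact hne ((hevalj t₁ x hx1).symm.trans (hevalj t₂ x hx2))
        have hcardF : ∀ t, (F t).card = m i t := by
          intro t
          apply Finset.card_image_of_injOn
          intro z₁ hz₁ z₂ hz₂ hzz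
          funext w
          by_cases hwj : w = j
          · rw [hwj, apply_eq_zero_of_mem_image_pr hz₁ hjsi, apply_eq_zero_of_mem_image_pr hz₂ hjsi]
          · have := congrFun hzz w
            simpa [Function.update_of_ne hwj] using this
        have hFsub : ∀ t ∈ T, F t ⊆ A.image (pr (s'.erase i)) := by
          intro t _ x hx
          obtain ⟨z, hz, rfl⟩ := Finset.mem_image.1 hx
          obtain ⟨x', hx', rfl⟩ := Finset.mem_image.1 hz
          have hx'B : x' ∈ B := (Finset.mem_filter.1 hx').1
          have hx'j : x' j = t := (Finset.mem_filter.1 hx').2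
          obtain ⟨y, hy, rfl⟩ := Finset.mem_image.1 hx'B
          refine Finset.mem_image.2 ⟨y, hy, ?_⟩
          funext w
          by_cases hwj : w = j
          · have hyj : y j = t := by simpa [pr, hjs'] using hx'j
            rw [hwj, Function.update_self]
            simp [pr, Finset.mem_erase, hij, hjs', hyj]
          · rw [Function.update_of_ne hwj]
            by_cases hw : w ∈ s.erase i
            · have hws : w ∈ s := Finset.mem_of_mem_erase hw
              have hwi : w ≠ i := (Finset.mem_erase.1 hw).1
              have h1 : pr (s.erase i) (pr s' y) w = y w := by simp [pr, hw, hss' hws]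
              have h2 : pr (s'.erase i) y w = y w := by
                simp [pr, Finset.mem_erase, hwi, hss' hws]
              rw [h1, h2]
            · have hw' : w ∉ s'.erase i := by
                intro hcon
                rcases Finset.mem_erase.1 hcon with ⟨hwi, hws'⟩
                rcases Finset.mem_insert.1 hws' with h | h
                · exact hwj h
                · exact hw (Finset.mem_erase.2 ⟨hwi, h⟩)
              simp [pr, hw, hw']
        calc ∑ t ∈ T, m i t = ∑ t ∈ T, (F t).card := by
              exact Finset.sum_congr rfl fun t _ => (hcardF t).symm
          _ = (T.biUnion F).card := (Finset.card_biUnion hdisj).symm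
          _ ≤ (A.image (pr (s'.erase i))).card := by
              apply Finset.card_le_card
              intro x hx
              obtain ⟨t, ht, hxt⟩ := Finset.mem_biUnion.1 hx
              exact hFsub t ht hxt
      -- assemble
      have hprodzero : ∀ t ∉ T, ∏ i ∈ s, ((m i t : ℝ≥0∞)) ^ (1/(k:ℝ)) = 0 := by
        intro t ht
        obtain ⟨i0, hi0⟩ := hs
        apply Finset.prod_eq_zero hi0
        rw [hmzero i0 t ht, Nat.cast_zero]
        exact ENNReal.zero_rpow_of_pos hk0''
      have main : (B.card : ℝ≥0∞) ≤ ((a:ℝ≥0∞) * ∏ i ∈ s, (c i : ℝ≥0∞)) ^ (1/(k:ℝ)) := by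
        calc (B.card : ℝ≥0∞) = ∑ t ∈ T, ((Afib t).card : ℝ≥0∞) := by
              rw [hL1, Nat.cast_sum]
          _ ≤ ∑ t ∈ T, ((a:ℝ≥0∞)) ^ (1/(k:ℝ)) * ∏ i ∈ s, ((m i t : ℝ≥0∞)) ^ (1/(k:ℝ)) :=
              Finset.sum_le_sum fun t _ => hfib' t
          _ = ((a:ℝ≥0∞)) ^ (1/(k:ℝ)) * ∑ t ∈ T, ∏ i ∈ s, ((m i t : ℝ≥0∞)) ^ (1/(k:ℝ)) := by
              rw [Finset.mul_sum]
          _ = ((a:ℝ≥0∞)) ^ (1/(k:ℝ)) * ∑' t : ℤ, ∏ i ∈ s, ((m i t : ℝ≥0∞)) ^ (1/(k:ℝ)) := by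
              rw [tsum_eq_sum hprodzero]
          _ ≤ ((a:ℝ≥0∞)) ^ (1/(k:ℝ)) * ∏ i ∈ s, (∑' t : ℤ, ((m i t : ℝ≥0∞))) ^ (1/(k:ℝ)) :=
              mul_le_mul' le_rfl hHolder
          _ ≤ ((a:ℝ≥0∞)) ^ (1/(k:ℝ)) * ∏ i ∈ s, ((c i : ℝ≥0∞)) ^ (1/(k:ℝ)) := by
              refine mul_le_mul' le_rfl (Finset.prod_le_prod' fun i hi => ?_)
              apply ENNReal.rpow_le_rpow _ hk0'
              rw [tsum_eq_sum (fun t ht => by rw [hmzero i t ht]; simp)]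
              exact_mod_cast Nat.cast_le.2 (hL4 i hi)
          _ = ((a:ℝ≥0∞) * ∏ i ∈ s, (c i : ℝ≥0∞)) ^ (1/(k:ℝ)) := by
              rw [ENNReal.mul_rpow_of_nonneg _ _ hk0', ← ENNReal.prod_rpow_of_nonneg hk0']
      have main2 : (B.card : ℝ≥0∞) ^ k ≤ (a:ℝ≥0∞) * ∏ i ∈ s, (c i:ℝ≥0∞) := by
        have h := ENNReal.rpow_le_rpow main (le_of_lt hkR)
        rw [← ENNReal.rpow_mul, one_div_mul_cancel hkR.ne', ENNReal.rpow_one,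
          ENNReal.rpow_natCast] at h
        exact h
      -- final goal
      have hcardins : s'.card = k + 1 := by rw [hs', Finset.card_insert_of_notMem hj, hk]
      have hprodins : ∏ i ∈ s', ((A.image (pr (s'.erase i))).card : ℝ≥0∞) =
          (a:ℝ≥0∞) * ∏ i ∈ s, (c i : ℝ≥0∞) := by
        rw [hs', Finset.prod_insert hj, Finset.erase_insert hj]
      show ((A.image (pr s')).card : ℝ≥0∞) ^ s'.card ≤
          ((A.image (pr s')).card : ℝ≥0∞) * ∏ i ∈ s', ((A.image (pr (s'.erase i))).card : ℝ≥0∞)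
      rw [hprodins, hcardins, pow_succ, mul_comm ((B.card : ℝ≥0∞) ^ k)]
      exact mul_le_mul' le_rfl main2

end LWAux

/-- Discrete intermediate value: going up from a true point to a false point. -/
lemma ivt_up (P : ℤ → Prop) (u : ℤ) : ∀ k : ℕ, P u → ¬ P (u + k) →
    ∃ j : ℕ, j < k ∧ P (u + j) ∧ ¬ P (u + j + 1) := by
  intro k
  induction k with
  | zero => intro h1 h2; simp at h2; exact absurd h1 h2
  | succ k ih =>
    intro h1 h2
    by_cases hk : P (u + k)
    · exact ⟨k, Nat.lt_succ_self k, hk, by push_cast at h2 ⊢; convert h2 using 2; ring⟩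
    · obtain ⟨j, hj, hP⟩ := ih h1 hk
      exact ⟨j, hj.trans (Nat.lt_succ_self k), hP⟩

lemma exists_flip (P : ℤ → Prop) {a b u v : ℤ} (hu : a ≤ u) (hu' : u ≤ b)
    (hv : a ≤ v) (hv' : v ≤ b) (hPu : P u) (hPv : ¬ P v) :
    ∃ t : ℤ, a ≤ t ∧ t + 1 ≤ b ∧ ((P t ∧ ¬ P (t+1)) ∨ (¬ P t ∧ P (t+1))) := by
  rcases le_or_gt u v with h | h
  · obtain ⟨j, hj, h1, h2⟩ := ivt_up P u (v - u).toNat hPu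
      (by rwa [Int.toNat_of_nonneg (by omega), add_sub_cancel])
    refine ⟨u + j, by omega, by omega, Or.inl ⟨h1, h2⟩⟩
  · obtain ⟨j, hj, h1, h2⟩ := ivt_up (fun t => ¬ P t) v (u - v).toNat hPv
      (by rw [Int.toNat_of_nonneg (by omega), add_sub_cancel]; exact fun h' => h' hPu)
    refine ⟨v + j, by omega, ?_, Or.inr ⟨h1, not_not.1 h2⟩⟩
    omega

namespace SobolevAux

open AnchoredNash LWAux Finset

variable {d r : ℕ}

lemma mem_box_iff {x : Zd d} : x ∈ box d r ↔ ∀ i, x i ∈ Finset.Icc (-(r:ℤ)) (r:ℤ) :=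
  Fintype.mem_piFinset

lemma card_box : (box d r).card = (2*r+1)^d := by
  unfold AnchoredNash.box
  rw [Fintype.card_piFinset]
  have h : ((Finset.Icc (-(r:ℤ)) (r:ℤ))).card = 2*r+1 := by
    rw [Int.card_Icc]; omega
  simp [h]

lemma mem_edgeBox_iff {e : Edge d} : e ∈ edgeBox d r ↔ e.1 ∈ box d r ∧ eplus e ∈ box d r := by
  unfold AnchoredNash.edgeBox
  rw [Finset.mem_filter, Finset.mem_product]
  simp only [Finset.mem_univ, and_true]

lemma update_eplus (y : Zd d) (i : Fin d) (t : ℤ) :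
    Function.update y i t + Pi.single i 1 = Function.update y i (t+1) := by
  funext w
  by_cases hw : w = i
  · subst hw; simp
  · simp [Function.update_of_ne hw, Pi.single_eq_of_ne hw]

/-- Edge boundary of a set `A` relative to the box. -/
def bdryE (d r : ℕ) (A : Finset (Zd d)) : Finset (Edge d) :=
  (edgeBox d r).filter fun e => (e.1 ∈ A ∧ eplus e ∉ A) ∨ (e.1 ∉ A ∧ eplus e ∈ A)

/-- Relative isoperimetric inequality in the box. -/
lemma iso (hd : 2 ≤ d) (A : Finset (Zd d)) (hAB : A ⊆ box d r)
    (h2 : 2 * A.card ≤ (box d r).card) :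
    ((A.card : ℝ)) ^ (((d:ℝ)-1)/d) ≤
      (1 - (2:ℝ) ^ (-(1:ℝ)/(d:ℝ)))⁻¹ * ((bdryE d r A).card : ℝ) := by
  have hd0 : (0:ℝ) < (d:ℝ) := by
    have : 0 < d := by omega
    exact_mod_cast this
  have hd1R : (1:ℝ) < (d:ℝ) := by exact_mod_cast (show 1 < d by omega)
  have hc1 : (2:ℝ) ^ (-(1:ℝ)/(d:ℝ)) < 1 :=
    Real.rpow_lt_one_of_one_lt_of_neg one_lt_two
      (div_neg_of_neg_of_pos (by norm_num) hd0)
  have hc0 : (0:ℝ) < (2:ℝ) ^ (-(1:ℝ)/(d:ℝ)) := Real.rpow_pos_of_pos two_pos _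
  have hcpos : (0:ℝ) < 1 - (2:ℝ) ^ (-(1:ℝ)/(d:ℝ)) := by linarith
  rcases A.eq_empty_or_nonempty with rfl | hA
  · rw [Finset.card_empty, Nat.cast_zero, Real.zero_rpow (div_pos (by linarith) hd0).ne']
    positivity
  -- nonempty case
  have : Nonempty (Fin d) := ⟨⟨0, by omega⟩⟩
  set n : ℕ := 2*r+1 with hn
  have hn0 : 0 < n := by omega
  set πi : Fin d → Finset (Zd d) := fun i => A.image (pr (Finset.univ.erase i)) with hπ
  set Full : Fin d → Finset (Zd d) := fun i =>
    (πi i).filter (fun y => ∀ t ∈ Finset.Icc (-(r:ℤ)) (r:ℤ), Function.update y i t ∈ A)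
    with hFull
  -- full lines are disjoint copies inside A
  have claim1 : ∀ i, (Full i).card * n ≤ A.card := by
    intro i
    have hmap : ∀ p ∈ (Full i) ×ˢ Finset.Icc (-(r:ℤ)) (r:ℤ),
        Function.update p.1 i p.2 ∈ A := by
      rintro ⟨y, t⟩ hp
      rw [Finset.mem_product] at hp
      exact (Finset.mem_filter.1 hp.1).2 t hp.2
    have hinj : Set.InjOn (fun p : (Zd d) × ℤ => Function.update p.1 i p.2)
        ((((Full i) ×ˢ Finset.Icc (-(r:ℤ)) (r:ℤ)) : Finset ((Zd d) × ℤ)) : Set ((Zd d) × ℤ)) := by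
      rintro ⟨y₁, t₁⟩ hp₁ ⟨y₂, t₂⟩ hp₂ hE
      simp only [Finset.mem_coe, Finset.mem_product] at hp₁ hp₂
      have hy₁ : y₁ ∈ πi i := Finset.mem_of_mem_filter _ hp₁.1
      have hy₂ : y₂ ∈ πi i := Finset.mem_of_mem_filter _ hp₂.1
      have hE' : Function.update y₁ i t₁ = Function.update y₂ i t₂ := hE
      replace hE := hE'
      have ht : t₁ = t₂ := by
        have := congrFun hE i
        simpa using this
      have hy : y₁ = y₂ := by
        funext w
        by_cases hw : w = i
        · rw [hw, apply_eq_zero_of_mem_image_pr hy₁ (Finset.notMem_erase i _),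
            apply_eq_zero_of_mem_image_pr hy₂ (Finset.notMem_erase i _)]
        · have := congrFun hE w
          simpa [Function.update_of_ne hw] using this
      rw [ht, hy]
    have := Finset.card_le_card_of_injOn _ hmap hinj
    rwa [Finset.card_product, Int.card_Icc, (by omega : ((r:ℤ) + 1 - -(r:ℤ)).toNat = n)] at this
  -- non-full lines produce boundary edges
  have claim2 : ∀ i, ((πi i) \ Full i).card ≤ (bdryE d r A).card := by
    intro i
    classical
    set Q : Zd d → Prop := fun y => ∃ t : ℤ, -(r:ℤ) ≤ t ∧ t + 1 ≤ (r:ℤ) ∧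
      ((Function.update y i t ∈ A ∧ Function.update y i (t+1) ∉ A) ∨
        (Function.update y i t ∉ A ∧ Function.update y i (t+1) ∈ A)) with hQ
    set f : Zd d → Edge d := fun y => if h : Q y then (Function.update y i h.choose, i)
      else (y, i) with hf
    -- every non-full fiber satisfies Q
    have hQholds : ∀ y ∈ (πi i) \ Full i, Q y := by
      intro y hy
      rw [Finset.mem_sdiff] at hy
      obtain ⟨x, hxA, hxy⟩ := Finset.mem_image.1 hy.1
      have hupdx : Function.update y i (x i) = x := by
        funext w
        by_cases hw : w = i
        · rw [hw]; simp
        · rw [Function.update_of_ne hw, ← hxy]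
          simp [pr, Finset.mem_erase, hw]
      have hxbox := hAB hxA
      have hxi : x i ∈ Finset.Icc (-(r:ℤ)) (r:ℤ) := mem_box_iff.1 hxbox i
      rw [Finset.mem_Icc] at hxi
      have hnotfull : ∃ t₁ ∈ Finset.Icc (-(r:ℤ)) (r:ℤ), Function.update y i t₁ ∉ A := by
        by_contra hcon
        push_neg at hcon
        exact hy.2 (Finset.mem_filter.2 ⟨hy.1, hcon⟩)
      obtain ⟨t₁, ht₁, ht₁A⟩ := hnotfull
      rw [Finset.mem_Icc] at ht₁
      obtain ⟨t, h1, h2, h3⟩ := exists_flip (fun t => Function.update y i t ∈ A)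
        hxi.1 hxi.2 ht₁.1 ht₁.2 (by simpa [hupdx] using hxA) ht₁A
      exact ⟨t, h1, h2, h3⟩
    -- the produced edge is a boundary edge
    have hmaps : ∀ y ∈ (πi i) \ Full i, f y ∈ bdryE d r A := by
      intro y hy
      have hQy := hQholds y hy
      rw [hf]; simp only [dif_pos hQy]
      obtain ⟨h1, h2, h3⟩ := hQy.choose_spec
      set t := hQy.choose
      rw [Finset.mem_sdiff] at hy
      obtain ⟨x, hxA, hxy⟩ := Finset.mem_image.1 hy.1
      have hybox : ∀ w, w ≠ i → y w ∈ Finset.Icc (-(r:ℤ)) (r:ℤ) := by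
        intro w hw
        rw [← hxy]
        have : pr (Finset.univ.erase i) x w = x w := by
          simp [pr, Finset.mem_erase, hw]
        rw [this]
        exact mem_box_iff.1 (hAB hxA) w
      have hbox1 : ∀ u : ℤ, -(r:ℤ) ≤ u → u ≤ (r:ℤ) → Function.update y i u ∈ box d r := by
        intro u hu hu'
        rw [mem_box_iff]
        intro w
        by_cases hw : w = i
        · rw [hw]; simpa [Finset.mem_Icc] using ⟨hu, hu'⟩
        · rw [Function.update_of_ne hw]; exact hybox w hw
      have heplus : eplus (Function.update y i t, i) = Function.update y i (t+1) := by
        rw [eplus]; exact update_eplus y i t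
      rw [bdryE, Finset.mem_filter]
      constructor
      · rw [mem_edgeBox_iff, heplus]
        exact ⟨hbox1 t h1 (by omega), hbox1 (t+1) (by omega) h2⟩
      · rw [heplus]; exact h3
    -- injectivity
    have hinj : Set.InjOn f ((((πi i) \ Full i) : Finset (Zd d)) : Set (Zd d)) := by
      intro y₁ hy₁ y₂ hy₂ hE
      simp only [Finset.mem_coe] at hy₁ hy₂
      have hQ₁ := hQholds y₁ hy₁
      have hQ₂ := hQholds y₂ hy₂
      rw [hf] at hE
      simp only [dif_pos hQ₁, dif_pos hQ₂, Prod.mk.injEq] at hE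
      have hy₁' : y₁ ∈ πi i := (Finset.mem_sdiff.1 hy₁).1
      have hy₂' : y₂ ∈ πi i := (Finset.mem_sdiff.1 hy₂).1
      funext w
      by_cases hw : w = i
      · rw [hw, apply_eq_zero_of_mem_image_pr hy₁' (Finset.notMem_erase i _),
          apply_eq_zero_of_mem_image_pr hy₂' (Finset.notMem_erase i _)]
      · have := congrFun hE.1 w
        rwa [Function.update_of_ne hw, Function.update_of_ne hw] at this
    exact Finset.card_le_card_of_injOn f hmaps hinj
  have claim3 : ∀ i, (πi i).card ≤ (bdryE d r A).card + (Full i).card := by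
    intro i
    have hsub : Full i ⊆ πi i := Finset.filter_subset _ _
    have h1 := Finset.card_sdiff_add_card_eq_card hsub
    have h2i := claim2 i
    omega
  -- Loomis-Whitney
  have hLW : A.card ^ (d - 1) ≤ ∏ i : Fin d, (πi i).card := by
    have h := lw_aux (Finset.univ : Finset (Fin d)) A hA
    have hid : A.image (pr (Finset.univ : Finset (Fin d))) = A := by
      have h0 : pr (Finset.univ : Finset (Fin d)) = id := by
        funext x w; simp [pr]
      rw [h0, Finset.image_id]
    rw [hid, Finset.card_univ, Fintype.card_fin] at h
    have hA0 : (A.card : ℝ≥0∞) ≠ 0 := by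
      simpa using Finset.card_ne_zero_of_mem hA.choose_spec
    have hAtop : (A.card : ℝ≥0∞) ≠ ⊤ := ENNReal.natCast_ne_top _
    have hsplitpow : ((A.card:ℝ≥0∞)) ^ d = (A.card:ℝ≥0∞) * (A.card:ℝ≥0∞) ^ (d-1) := by
      rw [← pow_succ']
      congr 1
      omega
    rw [hsplitpow] at h
    have h' : (A.card : ℝ≥0∞) ^ (d - 1) ≤ ∏ i : Fin d, ((πi i).card : ℝ≥0∞) :=
      (ENNReal.mul_le_mul_iff_right hA0 hAtop).1 h
    exact_mod_cast h'
  -- pass to the reals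
  set m : ℝ := (A.card : ℝ) with hm
  set b : ℝ := ((bdryE d r A).card : ℝ) with hb
  have hm1 : (1:ℝ) ≤ m := by
    rw [hm]; exact_mod_cast Finset.card_pos.2 hA
  have hb0 : (0:ℝ) ≤ b := by positivity
  set M : ℝ := m ^ (((d:ℝ)-1)/(d:ℝ)) with hM
  have hM0 : 0 ≤ M := Real.rpow_nonneg (by linarith) _
  have hfactor : ∀ i : Fin d, ((πi i).card : ℝ) ≤ b + m / n := by
    intro i
    have h1 := claim3 i
    have h2 : ((Full i).card : ℝ) ≤ m / n := by
      rw [le_div_iff₀ (by exact_mod_cast hn0), hm]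
      exact_mod_cast claim1 i
    have : ((πi i).card : ℝ) ≤ b + ((Full i).card : ℝ) := by
      rw [hb]; exact_mod_cast h1
    linarith
  have hreal1 : m ^ (d - 1) ≤ (b + m / n) ^ d := by
    calc m ^ (d-1) ≤ (∏ i : Fin d, ((πi i).card : ℝ)) := by
          rw [hm]; exact_mod_cast hLW
      _ ≤ ∏ _i : Fin d, (b + m / n) := by
          apply Finset.prod_le_prod (fun i _ => by positivity) (fun i _ => hfactor i)
      _ = (b + m / n) ^ d := by rw [Finset.prod_const, Finset.card_univ, Fintype.card_fin]
  have hhalf : m / n ≤ (2:ℝ) ^ (-(1:ℝ)/(d:ℝ)) * M := by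
    have hnn : (0:ℝ) < (n:ℝ) := by exact_mod_cast hn0
    have hmn : 2 * m ≤ (n:ℝ) ^ d := by
      have hx : 2 * A.card ≤ n ^ d := by rw [hn]; exact h2.trans_eq card_box
      rw [hm]; exact_mod_cast hx
    have hroot : m ^ ((1:ℝ)/(d:ℝ)) ≤ (n:ℝ) * (2:ℝ) ^ (-(1:ℝ)/(d:ℝ)) := by
      have h1 : m ≤ (n:ℝ) ^ d / 2 := by linarith
      have h2' : m ^ ((1:ℝ)/(d:ℝ)) ≤ ((n:ℝ) ^ d / 2) ^ ((1:ℝ)/(d:ℝ)) :=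
        Real.rpow_le_rpow (by linarith) h1 (by positivity)
      refine h2'.trans_eq ?_
      rw [Real.div_rpow (by positivity) (by norm_num), ← Real.rpow_natCast (n:ℝ) d,
        ← Real.rpow_mul hnn.le, mul_one_div, div_self hd0.ne', Real.rpow_one,
        div_eq_mul_inv, ← Real.rpow_neg_one ((2:ℝ) ^ ((1:ℝ)/(d:ℝ))), ← Real.rpow_mul (by norm_num)]
      congr 1
      ring
    have hsplit : m = m ^ (((d:ℝ)-1)/(d:ℝ)) * m ^ ((1:ℝ)/(d:ℝ)) := by
      rw [← Real.rpow_add (by linarith : (0:ℝ) < m),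
        show ((d:ℝ)-1)/(d:ℝ) + 1/(d:ℝ) = 1 by field_simp; ring, Real.rpow_one]
    rw [div_le_iff₀ hnn]
    calc m = m ^ (((d:ℝ)-1)/(d:ℝ)) * m ^ ((1:ℝ)/(d:ℝ)) := hsplit
      _ ≤ m ^ (((d:ℝ)-1)/(d:ℝ)) * ((n:ℝ) * (2:ℝ) ^ (-(1:ℝ)/(d:ℝ))) := by
          apply mul_le_mul_of_nonneg_left hroot (Real.rpow_nonneg (by linarith) _)
      _ = (2:ℝ) ^ (-(1:ℝ)/(d:ℝ)) * M * n := by rw [hM]; ring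
  have hMd : M ^ d = m ^ (d - 1) := by
    rw [hM, ← Real.rpow_natCast (m ^ (((d:ℝ)-1)/(d:ℝ))) d, ← Real.rpow_mul (by linarith),
      div_mul_cancel₀ _ hd0.ne', ← Real.rpow_natCast m (d-1)]
    congr 1
    have : ((d - 1 : ℕ) : ℝ) = (d:ℝ) - 1 := by
      have : 1 ≤ d := by omega
      push_cast [this]
      ring
    rw [this]
  have hfinal : M ^ d ≤ (b + (2:ℝ) ^ (-(1:ℝ)/(d:ℝ)) * M) ^ d := by
    rw [hMd]
    refine hreal1.trans ?_
    apply pow_le_pow_left₀ (by positivity)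
    linarith
  have hMle : M ≤ b + (2:ℝ) ^ (-(1:ℝ)/(d:ℝ)) * M := by
    have hdne : d ≠ 0 := by omega
    exact le_of_pow_le_pow_left₀ hdne (by positivity) hfinal
  rw [inv_mul_eq_div, le_div_iff₀ hcpos]
  linarith

/-- Main induction: Sobolev inequality for nonnegative functions vanishing on
half the box, by induction on the number of distinct nonzero values. -/
lemma key (d : ℕ) (hd : 2 ≤ d) (r : ℕ) : ∀ N : ℕ, ∀ g : Zd d → ℝ,
    (∀ x ∈ box d r, 0 ≤ g x) →
    (box d r).card ≤ 2 * ((box d r).filter fun x => g x = 0).card →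
    (((box d r).filter fun x => g x ≠ 0).image g).card ≤ N →
    (∑ x ∈ box d r, |g x| ^ ((d:ℝ)/((d:ℝ)-1))) ^ (((d:ℝ)-1)/(d:ℝ)) ≤
      (1 - (2:ℝ) ^ (-(1:ℝ)/(d:ℝ)))⁻¹ *
        ∑ e ∈ edgeBox d r, |g (eplus e) - g e.1| := by
  have hd0 : (0:ℝ) < (d:ℝ) := by exact_mod_cast (show 0 < d by omega)
  have hd1R : (1:ℝ) < (d:ℝ) := by exact_mod_cast (show 1 < d by omega)
  have hc1 : (2:ℝ) ^ (-(1:ℝ)/(d:ℝ)) < 1 :=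
    Real.rpow_lt_one_of_one_lt_of_neg one_lt_two
      (div_neg_of_neg_of_pos (by norm_num) hd0)
  have hcpos : (0:ℝ) < 1 - (2:ℝ) ^ (-(1:ℝ)/(d:ℝ)) := by
    have := Real.rpow_pos_of_pos (show (0:ℝ) < 2 by norm_num) (-(1:ℝ)/(d:ℝ))
    linarith
  set C : ℝ := (1 - (2:ℝ) ^ (-(1:ℝ)/(d:ℝ)))⁻¹ with hC
  have hC0 : 0 ≤ C := inv_nonneg.2 hcpos.le
  set p : ℝ := (d:ℝ)/((d:ℝ)-1) with hp
  have hp0 : 0 < p := div_pos hd0 (by linarith)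
  have hp1 : 1 ≤ p := by
    rw [hp, le_div_iff₀ (by linarith)]
    linarith
  have hpinv : 1/p = ((d:ℝ)-1)/(d:ℝ) := by
    rw [hp, one_div_div]
  intro N
  induction N with
  | zero =>
    intro g hg0 hghalf hgval
    have hempty : ((box d r).filter fun x => g x ≠ 0) = ∅ := by
      rw [← Finset.card_eq_zero]
      by_contra hc
      have : (((box d r).filter fun x => g x ≠ 0)).Nonempty :=
        Finset.nonempty_of_ne_empty (by
          intro h; exact hc (by rw [h]; simp))
      have := Finset.card_pos.2 (this.image g)
      omega
    have hzero : ∀ x ∈ box d r, g x = 0 := by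
      intro x hx
      by_contra hne
      have : x ∈ (box d r).filter fun x => g x ≠ 0 := Finset.mem_filter.2 ⟨hx, hne⟩
      rw [hempty] at this
      exact absurd this (Finset.notMem_empty x)
    have hsum : (∑ x ∈ box d r, |g x| ^ p) = 0 := by
      apply Finset.sum_eq_zero
      intro x hx
      rw [hzero x hx, abs_zero, Real.zero_rpow hp0.ne']
    rw [← hpinv, hsum, Real.zero_rpow (by positivity)]
    have : (0:ℝ) ≤ ∑ e ∈ edgeBox d r, |g (eplus e) - g e.1| :=
      Finset.sum_nonneg fun e _ => abs_nonneg _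
    positivity
  | succ N ih =>
    intro g hg0 hghalf hgval
    set A : Finset (Zd d) := (box d r).filter (fun x => g x ≠ 0) with hA
    rcases A.eq_empty_or_nonempty with hAe | hAne
    · -- no nonzero values at all: same as base case
      have hzero : ∀ x ∈ box d r, g x = 0 := by
        intro x hx
        by_contra hne
        have : x ∈ A := Finset.mem_filter.2 ⟨hx, hne⟩
        rw [hAe] at this
        exact absurd this (Finset.notMem_empty x)
      have hsum : (∑ x ∈ box d r, |g x| ^ p) = 0 := by
        apply Finset.sum_eq_zero
        intro x hx
        rw [hzero x hx, abs_zero, Real.zero_rpow hp0.ne']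
      rw [← hpinv, hsum, Real.zero_rpow (by positivity)]
      have : (0:ℝ) ≤ ∑ e ∈ edgeBox d r, |g (eplus e) - g e.1| :=
        Finset.sum_nonneg fun e _ => abs_nonneg _
      positivity
    · -- main step
      have hAsub : A ⊆ box d r := Finset.filter_subset _ _
      have hAim : (A.image g).Nonempty := hAne.image g
      set m : ℝ := (A.image g).min' hAim with hmdef
      obtain ⟨x₀, hx₀A, hx₀⟩ := Finset.mem_image.1 ((A.image g).min'_mem hAim)
      have hx₀h := Finset.mem_filter.1 hx₀A
      have hm_pos : 0 < m := by
        rw [hmdef, ← hx₀]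
        exact lt_of_le_of_ne (hg0 x₀ hx₀h.1) (Ne.symm hx₀h.2)
      have hm_le : ∀ x ∈ A, m ≤ g x := fun x hx =>
        Finset.min'_le _ _ (Finset.mem_image_of_mem g hx)
      have hgA0 : ∀ x ∈ box d r, x ∉ A → g x = 0 := by
        intro x hx hxA
        by_contra hne
        exact hxA (Finset.mem_filter.2 ⟨hx, hne⟩)
      classical
      set g' : Zd d → ℝ := fun x => if x ∈ A then g x - m else 0 with hg'
      have hg'0 : ∀ x ∈ box d r, 0 ≤ g' x := by
        intro x hx
        rw [hg']
        by_cases hxA : x ∈ A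
        · simp only [if_pos hxA]
          have := hm_le x hxA
          linarith
        · simp [hxA]
      have hg'half : (box d r).card ≤ 2 * ((box d r).filter fun x => g' x = 0).card := by
        refine hghalf.trans ?_
        have : ((box d r).filter fun x => g x = 0) ⊆ ((box d r).filter fun x => g' x = 0) := by
          intro x hx
          rw [Finset.mem_filter] at hx ⊢
          refine ⟨hx.1, ?_⟩
          have hxA : x ∉ A := by
            intro hc
            exact (Finset.mem_filter.1 hc).2 hx.2
          simp [hg', hxA]
        have := Finset.card_le_card this
        omega
      have hg'val : (((box d r).filter fun x => g' x ≠ 0).image g').card ≤ N := by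
        have hsub : ((box d r).filter fun x => g' x ≠ 0).image g' ⊆
            ((A.image g).erase m).image (fun v => v - m) := by
          intro y hy
          obtain ⟨x, hx, rfl⟩ := Finset.mem_image.1 hy
          rw [Finset.mem_filter] at hx
          have hxA : x ∈ A := by
            by_contra hxA
            exact hx.2 (by simp [hg', hxA])
          have hgx : g' x = g x - m := by simp [hg', hxA]
          refine Finset.mem_image.2 ⟨g x, ?_, hgx.symm ▸ rfl⟩
          refine Finset.mem_erase.2 ⟨?_, Finset.mem_image_of_mem g hxA⟩
          intro hgm
          apply hx.2
          rw [hgx, hgm, sub_self]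
        have h1 := Finset.card_le_card hsub
        have h2 := Finset.card_image_le (s := (A.image g).erase m) (f := fun v => v - m)
        have h3 : ((A.image g).erase m).card = (A.image g).card - 1 :=
          Finset.card_erase_of_mem ((A.image g).min'_mem hAim)
        have h4 : (A.image g).card ≤ N + 1 := hgval
        omega
      -- indicator function
      set χ : Zd d → ℝ := fun x => if x ∈ A then 1 else 0 with hχ
      -- pointwise decomposition on the box
      have hpt : ∀ x ∈ box d r, g x = g' x + m * χ x := by
        intro x hx
        by_cases hxA : x ∈ A
        · simp [hg', hχ, hxA]
        · simp [hg', hχ, hxA, hgA0 x hx hxA]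
      -- edge decomposition
      have hedge : ∀ e ∈ edgeBox d r,
          |g (eplus e) - g e.1| = |g' (eplus e) - g' e.1| + m * |χ (eplus e) - χ e.1| := by
        intro e he
        have hbox := mem_edgeBox_iff.1 he
        by_cases h1 : e.1 ∈ A <;> by_cases h2 : eplus e ∈ A
        · have e1 : g' e.1 = g e.1 - m := by simp [hg', h1]
          have e2 : g' (eplus e) = g (eplus e) - m := by simp [hg', h2]
          rw [e1, e2]
          simp only [hχ, if_pos h1, if_pos h2, sub_self, abs_zero, mul_zero, add_zero]
          congr 1
          ring
        · have e1 : g' e.1 = g e.1 - m := by simp [hg', h1]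
          have e2 : g' (eplus e) = 0 := by simp [hg', h2]
          have e3 : g (eplus e) = 0 := hgA0 _ hbox.2 h2
          have h4 : m ≤ g e.1 := hm_le _ h1
          rw [e1, e2, e3]
          simp only [hχ, if_pos h1, if_neg h2, zero_sub, abs_neg]
          rw [abs_of_nonneg (by linarith : (0:ℝ) ≤ g e.1),
            abs_of_nonneg (by linarith : (0:ℝ) ≤ g e.1 - m),
            abs_of_nonneg (by norm_num : (0:ℝ) ≤ (1:ℝ))]
          ring
        · have e1 : g' e.1 = 0 := by simp [hg', h1]
          have e2 : g' (eplus e) = g (eplus e) - m := by simp [hg', h2]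
          have e3 : g e.1 = 0 := hgA0 _ hbox.1 h1
          have h4 : m ≤ g (eplus e) := hm_le _ h2
          rw [e1, e2, e3]
          simp only [hχ, if_neg h1, if_pos h2, sub_zero]
          rw [abs_of_nonneg (by linarith : (0:ℝ) ≤ g (eplus e)),
            abs_of_nonneg (by linarith : (0:ℝ) ≤ g (eplus e) - m),
            abs_of_nonneg (by norm_num : (0:ℝ) ≤ (1:ℝ))]
          ring
        · have e1 : g' e.1 = 0 := by simp [hg', h1]
          have e2 : g' (eplus e) = 0 := by simp [hg', h2]
          have e3 : g e.1 = 0 := hgA0 _ hbox.1 h1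
          have e4 : g (eplus e) = 0 := hgA0 _ hbox.2 h2
          rw [e1, e2, e3, e4]
          simp [hχ, h1, h2]
      -- sum decomposition
      have hbdsum : ∑ e ∈ edgeBox d r, |χ (eplus e) - χ e.1| = ((bdryE d r A).card : ℝ) := by
        have hterm : ∀ e ∈ edgeBox d r, |χ (eplus e) - χ e.1| =
            if (e.1 ∈ A ∧ eplus e ∉ A) ∨ (e.1 ∉ A ∧ eplus e ∈ A) then (1:ℝ) else 0 := by
          intro e he
          by_cases h1 : e.1 ∈ A <;> by_cases h2 : eplus e ∈ A <;>
            simp [hχ, h1, h2]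
        rw [Finset.sum_congr rfl hterm, Finset.sum_boole, bdryE]
      have hS : ∑ e ∈ edgeBox d r, |g (eplus e) - g e.1| =
          (∑ e ∈ edgeBox d r, |g' (eplus e) - g' e.1|) + m * ((bdryE d r A).card : ℝ) := by
        rw [Finset.sum_congr rfl hedge, Finset.sum_add_distrib, ← Finset.mul_sum, hbdsum]
      -- Minkowski
      have hmink : (∑ x ∈ box d r, |g x| ^ p) ^ (1/p) ≤
          (∑ x ∈ box d r, |g' x| ^ p) ^ (1/p) + m * ((A.card : ℝ)) ^ (1/p) := by
        have hre : ∑ x ∈ box d r, |g x| ^ p = ∑ x ∈ box d r, (g' x + m * χ x) ^ p := by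
          refine Finset.sum_congr rfl fun x hx => ?_
          rw [abs_of_nonneg (hg0 x hx), hpt x hx]
        have hmk := Real.Lp_add_le_of_nonneg (s := box d r) (f := g') (g := fun x => m * χ x)
          hp1 (fun x hx => hg'0 x hx)
          (fun x hx => by
            rw [hχ]
            by_cases hxA : x ∈ A <;> simp [hxA, hm_pos.le])
        have hre2 : ∑ x ∈ box d r, (m * χ x) ^ p = (A.card : ℝ) * m ^ p := by
          have : ∀ x ∈ box d r, (m * χ x) ^ p = if x ∈ A then m ^ p else 0 := by
            intro x hx
            by_cases hxA : x ∈ A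
            · simp [hχ, hxA]
            · simp [hχ, hxA, Real.zero_rpow hp0.ne']
          rw [Finset.sum_congr rfl this, Finset.sum_ite_mem,
            Finset.inter_eq_right.2 hAsub, Finset.sum_const, nsmul_eq_mul]
        have hre3 : ((A.card : ℝ) * m ^ p) ^ (1/p) = m * ((A.card : ℝ)) ^ (1/p) := by
          rw [Real.mul_rpow (Nat.cast_nonneg _) (by positivity), ← Real.rpow_mul hm_pos.le,
            mul_one_div, div_self hp0.ne', Real.rpow_one, mul_comm]
        have hre4 : ∑ x ∈ box d r, |g' x| ^ p = ∑ x ∈ box d r, g' x ^ p := by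
          refine Finset.sum_congr rfl fun x hx => ?_
          rw [abs_of_nonneg (hg'0 x hx)]
        calc (∑ x ∈ box d r, |g x| ^ p) ^ (1/p)
            = (∑ x ∈ box d r, (g' x + m * χ x) ^ p) ^ (1/p) := by rw [hre]
          _ ≤ (∑ x ∈ box d r, g' x ^ p) ^ (1/p) +
                (∑ x ∈ box d r, (m * χ x) ^ p) ^ (1/p) := hmk
          _ = (∑ x ∈ box d r, |g' x| ^ p) ^ (1/p) + m * ((A.card : ℝ)) ^ (1/p) := by
              rw [hre2, hre3, hre4]
      -- isoperimetry applies to A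
      have hhalfA : 2 * A.card ≤ (box d r).card := by
        have hdisj : Disjoint A ((box d r).filter fun x => g x = 0) := by
          rw [Finset.disjoint_left]
          intro x hx hx'
          exact (Finset.mem_filter.1 hx).2 (Finset.mem_filter.1 hx').2
        have hsub : A ∪ ((box d r).filter fun x => g x = 0) ⊆ box d r := by
          intro x hx
          rcases Finset.mem_union.1 hx with h | h
          · exact hAsub h
          · exact Finset.filter_subset _ _ h
        have h1 := Finset.card_le_card hsub
        rw [Finset.card_union_of_disjoint hdisj] at h1
        omega
      have hiso := iso hd A hAsub hhalfA
      -- induction hypothesis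
      have hIH := ih g' hg'0 hg'half hg'val
      -- combine
      rw [← hpinv] at hIH ⊢
      have hmono : m * ((A.card : ℝ)) ^ (1/p) ≤
          m * (C * ((bdryE d r A).card : ℝ)) := by
        apply mul_le_mul_of_nonneg_left _ hm_pos.le
        rw [hpinv]
        exact hiso
      calc (∑ x ∈ box d r, |g x| ^ p) ^ (1/p)
          ≤ (∑ x ∈ box d r, |g' x| ^ p) ^ (1/p) + m * ((A.card : ℝ)) ^ (1/p) := hmink
        _ ≤ C * (∑ e ∈ edgeBox d r, |g' (eplus e) - g' e.1|) +
              m * (C * ((bdryE d r A).card : ℝ)) := add_le_add hIH hmono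
        _ = C * ((∑ e ∈ edgeBox d r, |g' (eplus e) - g' e.1|) +
              m * ((bdryE d r A).card : ℝ)) := by ring
        _ = C * ∑ e ∈ edgeBox d r, |g (eplus e) - g e.1| := by rw [← hS]

end SobolevAux

namespace AnchoredNash
/-- Sobolev inequality for functions vanishing on half the box
(key step in the proof of Theorem 2.7). -/
theorem sobolev_vanishing_on_half_box
    (d : ℕ) (hd : 2 ≤ d) :
    ∃ C : ℝ, 0 ≤ C ∧ ∀ r : ℕ, 1 ≤ r → ∀ g : Zd d → ℝ,
      (∀ x ∈ box d r, 0 ≤ g x) →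
      (box d r).card ≤ 2 * ((box d r).filter fun x => g x = 0).card →
      boxLp d r ((d : ℝ) / ((d : ℝ) - 1)) g ≤ C * gradLp d r 1 g := by
  have hd0 : (0:ℝ) < (d:ℝ) := by exact_mod_cast (show 0 < d by omega)
  have hc1 : (2:ℝ) ^ (-(1:ℝ)/(d:ℝ)) < 1 :=
    Real.rpow_lt_one_of_one_lt_of_neg one_lt_two
      (div_neg_of_neg_of_pos (by norm_num) hd0)
  have hcpos : (0:ℝ) < 1 - (2:ℝ) ^ (-(1:ℝ)/(d:ℝ)) := by
    have := Real.rpow_pos_of_pos (show (0:ℝ) < 2 by norm_num) (-(1:ℝ)/(d:ℝ))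
    linarith
  refine ⟨(1 - (2:ℝ) ^ (-(1:ℝ)/(d:ℝ)))⁻¹, inv_nonneg.2 hcpos.le, ?_⟩
  intro r hr g hg0 hghalf
  have hkey := SobolevAux.key d hd r
    ((((box d r).filter fun x => g x ≠ 0).image g).card) g hg0 hghalf le_rfl
  have h1 : 1/((d:ℝ)/((d:ℝ)-1)) = ((d:ℝ)-1)/(d:ℝ) := one_div_div _ _
  have h2 : gradLp d r 1 g = ∑ e ∈ edgeBox d r, |g (eplus e) - g e.1| := by
    rw [gradLp]
    simp [Real.rpow_one]
  rw [boxLp, h1, h2]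
  exact hkey

end AnchoredNash
end
end

section
/- Potential-kernel bound on the oscillation of a function around its box average (inequality (2.8) in the proof of Theorem 2.5): Let d ≥ 2. There exists a constant C < ∞, depending only on d, such that for every positive integer r, every function f : B_r → ℝ, and every x ∈ B_r, one has |f(x) − f̄_r| ≤ C ∑_{e ∈ 𝔹_r} (1 + |x − e̲|)^{−(d−1)} |∇f|(e), where f̄_r = |B_r|^{−1} ∑_{y∈B_r} f(y), e̲ denotes an endpoint of the edge e, and |·| is the Euclidean norm. -/
open scoped ENNReal NNReal
open Set MeasureTheory

noncomputable section

namespace AnchoredNash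
private lemma tele_int (F : ℤ → ℝ) {a b : ℤ} (h : a ≤ b) :
    F b - F a = ∑ t ∈ Finset.Ico a b, (F (t+1) - F t) := by
  refine Int.le_induction (motive := fun n _ => F n - F a = ∑ t ∈ Finset.Ico a n, (F (t+1) - F t)) ?_ ?_ b h
  · simp
  · intro b hb ih
    have hins : Finset.Ico a (b+1) = insert b (Finset.Ico a b) := by
      ext t; simp [Finset.mem_Ico, Finset.mem_insert]; omega
    rw [hins, Finset.sum_insert (by simp [Finset.mem_Ico])]
    rw [← ih]; ring

private lemma tele_abs (F : ℤ → ℝ) (a b : ℤ) :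
    |F b - F a| ≤ ∑ t ∈ Finset.Ico (min a b) (max a b), |F (t+1) - F t| := by
  rcases le_total a b with h | h
  · rw [min_eq_left h, max_eq_right h, tele_int F h]
    exact Finset.abs_sum_le_sum_abs _ _
  · rw [min_eq_right h, max_eq_left h, abs_sub_comm, tele_int F h]
    exact Finset.abs_sum_le_sum_abs _ _
private lemma sum_comp_le {α β : Type*} [DecidableEq β] (s : Finset α) (t : Finset β)
    (φ : α → β) (F : β → ℝ) (N : ℕ)
    (hmap : ∀ a ∈ s, φ a ∈ t)
    (hfib : ∀ b ∈ t, (s.filter (fun a => φ a = b)).card ≤ N)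
    (hF : ∀ b, 0 ≤ F b) :
    ∑ a ∈ s, F (φ a) ≤ (N : ℝ) * ∑ b ∈ t, F b := by
  rw [Finset.sum_comp]
  have h1 : ∑ b ∈ s.image φ, ((s.filter (fun a => φ a = b)).card • F b)
      ≤ ∑ b ∈ s.image φ, (N : ℝ) * F b := by
    apply Finset.sum_le_sum
    intro b hb
    rw [nsmul_eq_mul]
    have hbt : b ∈ t := by
      obtain ⟨a, ha, rfl⟩ := Finset.mem_image.mp hb
      exact hmap a ha
    exact mul_le_mul_of_nonneg_right (by exact_mod_cast hfib b hbt) (hF b)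
  refine h1.trans ?_
  rw [← Finset.mul_sum]
  apply mul_le_mul_of_nonneg_left _ (Nat.cast_nonneg N)
  apply Finset.sum_le_sum_of_subset_of_nonneg
  · intro b hb
    obtain ⟨a, ha, rfl⟩ := Finset.mem_image.mp hb
    exact hmap a ha
  · intro b _ _; exact hF b
private lemma geom_filter_le {a M : ℝ} (ha0 : 0 ≤ a) (ha : a ≤ 1/2) (hM : 0 ≤ M)
    (K : ℕ) (P : ℕ → Prop) [DecidablePred P]
    (h : ∀ k < K, P k → a ^ k ≤ M) :
    ∑ k ∈ Finset.range K, (if P k then a ^ k else 0) ≤ 2 * M := by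
  rw [Finset.sum_ite, Finset.sum_const_zero, add_zero]
  set S := (Finset.range K).filter P with hS
  rcases S.eq_empty_or_nonempty with hE | hNE
  · rw [hE]; simpa using by positivity
  · set k0 := S.min' hNE with hk0
    have hk0S : k0 ∈ S := S.min'_mem hNE
    have hk0K : k0 < K := Finset.mem_range.mp (Finset.mem_filter.mp hk0S).1
    have hPk0 : P k0 := (Finset.mem_filter.mp hk0S).2
    have hsub : S ⊆ Finset.Ico k0 K := by
      intro k hk
      rw [Finset.mem_Ico]
      exact ⟨S.min'_le k hk, Finset.mem_range.mp (Finset.mem_filter.mp hk).1⟩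
    have h1 : ∑ k ∈ S, a ^ k ≤ ∑ k ∈ Finset.Ico k0 K, a ^ k :=
      Finset.sum_le_sum_of_subset_of_nonneg hsub (fun k _ _ => by positivity)
    have h2 : ∑ k ∈ Finset.Ico k0 K, a ^ k = a ^ k0 * ∑ i ∈ Finset.range (K - k0), a ^ i := by
      rw [Finset.sum_Ico_eq_sum_range, Finset.mul_sum]
      exact Finset.sum_congr rfl fun i _ => by rw [pow_add]
    have h3 : ∑ i ∈ Finset.range (K - k0), a ^ i ≤ 2 := by
      calc ∑ i ∈ Finset.range (K - k0), a ^ i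
          ≤ ∑ i ∈ Finset.range (K - k0), (1/2 : ℝ) ^ i :=
            Finset.sum_le_sum fun i _ => pow_le_pow_left₀ ha0 ha i
        _ ≤ 2 := sum_geometric_two_le _
    calc ∑ k ∈ S, a ^ k ≤ a ^ k0 * ∑ i ∈ Finset.range (K - k0), a ^ i := by rw [← h2]; exact h1
      _ ≤ a ^ k0 * 2 := by
          apply mul_le_mul_of_nonneg_left h3 (by positivity)
      _ ≤ M * 2 := mul_le_mul_of_nonneg_right (h k0 hk0K hPk0) (by norm_num)
      _ = 2 * M := by ring
/-- Base point of the `t`-th edge in direction `j` on the staircase path from `y` to `z`. -/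
def V {d : ℕ} (y z : Zd d) (j : Fin d) (t : ℤ) : Zd d :=
  fun i => if i < j then z i else if i = j then t else y i

private lemma eplusV {d : ℕ} (y z : Zd d) (j : Fin d) (t : ℤ) :
    eplus (V y z j t, j) = V y z j (t+1) := by
  funext i
  simp only [eplus, V, Pi.add_apply]
  rcases lt_trichotomy i j with h | h | h
  · simp [h, Pi.single_eq_of_ne (ne_of_lt h), not_lt.mpr h.le]
  · subst h; simp [Pi.single_eq_same, lt_irrefl]
  · simp [Pi.single_eq_of_ne (ne_of_gt h), not_lt.mpr h.le, (ne_of_gt h), h.ne']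
private lemma path_bound_s7 {d : ℕ} (f : Zd d → ℝ) (y z : Zd d) :
    |f z - f y| ≤ ∑ j : Fin d, ∑ t ∈ Finset.Ico (min (y j) (z j)) (max (y j) (z j)),
      |f (eplus (V y z j t, j)) - f (V y z j t)| := by
  set mix : ℕ → Zd d := fun m i => if (i : ℕ) < m then z i else y i with hmix
  have hmix0 : mix 0 = y := by funext i; simp [hmix]
  have hmixd : mix d = z := by funext i; simp [hmix, i.isLt]
  have h1 : f z - f y = ∑ m ∈ Finset.range d, (f (mix (m+1)) - f (mix m)) := by
    rw [Finset.sum_range_sub (fun m => f (mix m)) d, hmix0, hmixd]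
  have h2 : |f z - f y| ≤ ∑ m ∈ Finset.range d, |f (mix (m+1)) - f (mix m)| := by
    rw [h1]; exact Finset.abs_sum_le_sum_abs _ _
  refine h2.trans ?_
  rw [← Fin.sum_univ_eq_sum_range (fun m => |f (mix (m+1)) - f (mix m)|) d]
  apply Finset.sum_le_sum
  intro j _
  have hup : mix ((j : ℕ) + 1) = V y z j (z j) := by
    funext i
    simp only [hmix, V]
    rcases lt_trichotomy i j with h | h | h
    · simp [h, Nat.lt_succ_of_lt (Fin.lt_def.mp h), Fin.lt_def.mp h]
    · subst h; simp
    · have h1 : ¬ ((i:ℕ) < (j:ℕ) + 1) := by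
        have := Fin.lt_def.mp h; omega
      simp [h1, not_lt.mpr h.le, h.ne', (Fin.lt_asymm h : ¬ i < j)]
  have hlo : mix (j : ℕ) = V y z j (y j) := by
    funext i
    simp only [hmix, V]
    rcases lt_trichotomy i j with h | h | h
    · simp [h, Fin.lt_def.mp h]
    · subst h; simp
    · have h1 : ¬ ((i:ℕ) < (j:ℕ)) := by
        have := Fin.lt_def.mp h; omega
      simp [h1, h.ne', (Fin.lt_asymm h : ¬ i < j)]
  rw [hup, hlo]
  have := tele_abs (fun t => f (V y z j t)) (y j) (z j)
  refine this.trans (le_of_eq ?_)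
  apply Finset.sum_congr rfl
  intro t _
  rw [eplusV]
private lemma step_bound {d : ℕ} (f : Zd d → ℝ) (aA bA aB bB : Fin d → ℤ) (n : ℕ)
    (hn : 1 ≤ n)
    (h1 : ∀ i, aB i ≤ aA i) (h2 : ∀ i, aA i ≤ bA i) (h3 : ∀ i, bA i ≤ bB i)
    (hs : ∀ i, (n : ℤ) ≤ bA i - aA i + 1) :
    |(∑ y ∈ Fintype.piFinset (fun i => Finset.Icc (aA i) (bA i)), f y) /
        ((Fintype.piFinset (fun i => Finset.Icc (aA i) (bA i))).card : ℝ) -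
      (∑ y ∈ Fintype.piFinset (fun i => Finset.Icc (aB i) (bB i)), f y) /
        ((Fintype.piFinset (fun i => Finset.Icc (aB i) (bB i))).card : ℝ)|
      ≤ (((n : ℝ)) ^ (d - 1))⁻¹ *
        ∑ j : Fin d, ∑ v ∈ Fintype.piFinset
            (fun i => if i = j then Finset.Ico (aB j) (bB j) else Finset.Icc (aB i) (bB i)),
          |f (eplus (v, j)) - f v| := by
  classical
  set A := Fintype.piFinset (fun i => Finset.Icc (aA i) (bA i)) with hA
  set B := Fintype.piFinset (fun i => Finset.Icc (aB i) (bB i)) with hB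
  set W : Fin d → Finset (Zd d) := fun j => Fintype.piFinset
      (fun i => if i = j then Finset.Ico (aB j) (bB j) else Finset.Icc (aB i) (bB i)) with hW
  have cardA : A.card = ∏ i, (Finset.Icc (aA i) (bA i)).card := Fintype.card_piFinset _
  have cardB : B.card = ∏ i, (Finset.Icc (aB i) (bB i)).card := Fintype.card_piFinset _
  have hABi : ∀ i, Finset.Icc (aA i) (bA i) ⊆ Finset.Icc (aB i) (bB i) :=
    fun i => Finset.Icc_subset_Icc (h1 i) (h3 i)
  have hAB : A ⊆ B := by
    intro y hy
    rw [hA, Fintype.mem_piFinset] at hy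
    rw [hB, Fintype.mem_piFinset]
    exact fun i => hABi i (hy i)
  have hAne : (0 : ℝ) < A.card := by
    have : A.Nonempty := by
      rw [hA, Fintype.piFinset_nonempty]
      intro i; exact Finset.nonempty_Icc.mpr (h2 i)
    exact_mod_cast Finset.card_pos.mpr this
  have hBne : (0 : ℝ) < B.card := lt_of_lt_of_le hAne (by exact_mod_cast Finset.card_le_card hAB)
  have hmemA : ∀ y ∈ A, ∀ i, aA i ≤ y i ∧ y i ≤ bA i := by
    intro y hy i; exact Finset.mem_Icc.mp (Fintype.mem_piFinset.mp hy i)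
  have hmemB : ∀ y ∈ B, ∀ i, aB i ≤ y i ∧ y i ≤ bB i := by
    intro y hy i; exact Finset.mem_Icc.mp (Fintype.mem_piFinset.mp hy i)
  -- step 1 : averaging identity
  have key : (∑ y ∈ A, f y) / (A.card : ℝ) - (∑ y ∈ B, f y) / (B.card : ℝ)
      = (∑ p ∈ A ×ˢ B, (f p.1 - f p.2)) / ((A.card : ℝ) * B.card) := by
    rw [Finset.sum_product]
    have e1 : ∑ y ∈ A, ∑ z ∈ B, (f y - f z)
        = (B.card : ℝ) * ∑ y ∈ A, f y - (A.card : ℝ) * ∑ z ∈ B, f z := by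
      calc ∑ y ∈ A, ∑ z ∈ B, (f y - f z)
          = ∑ y ∈ A, ((B.card : ℝ) * f y - ∑ z ∈ B, f z) := by
            refine Finset.sum_congr rfl fun y _ => ?_
            rw [Finset.sum_sub_distrib, Finset.sum_const, nsmul_eq_mul]
        _ = (B.card : ℝ) * ∑ y ∈ A, f y - (A.card : ℝ) * ∑ z ∈ B, f z := by
            rw [Finset.sum_sub_distrib, ← Finset.mul_sum, Finset.sum_const, nsmul_eq_mul]
    rw [e1]
    field_simp
  rw [key, abs_div, abs_of_pos (mul_pos hAne hBne)]
  -- step 2 : path bound with enlarged t-range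
  have hpath : ∀ p ∈ A ×ˢ B, |f p.1 - f p.2| ≤
      ∑ j : Fin d, ∑ t ∈ Finset.Ico (aB j) (bB j),
        |f (eplus (V p.1 p.2 j t, j)) - f (V p.1 p.2 j t)| := by
    rintro ⟨y, z⟩ hp
    obtain ⟨hyA, hzB⟩ := Finset.mem_product.mp hp
    have hyB := hAB hyA
    have h := path_bound_s7 f y z
    rw [abs_sub_comm] at h
    refine h.trans (Finset.sum_le_sum fun j _ => ?_)
    apply Finset.sum_le_sum_of_subset_of_nonneg
    · apply Finset.Ico_subset_Ico
      · exact le_min (hmemB y hyB j).1 (hmemB z hzB j).1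
      · exact max_le (hmemB y hyB j).2 (hmemB z hzB j).2
    · intro t _ _; positivity
  -- step 3 : counting per direction
  have hcount : ∀ j : Fin d,
      ∑ p ∈ A ×ˢ B, ∑ t ∈ Finset.Ico (aB j) (bB j),
        |f (eplus (V p.1 p.2 j t, j)) - f (V p.1 p.2 j t)|
      ≤ ((A.card : ℝ) * B.card) * (((n:ℝ) ^ (d-1))⁻¹ * ∑ v ∈ W j, |f (eplus (v, j)) - f v|) := by
    intro j
    set s : Finset ((Zd d × Zd d) × ℤ) := (A ×ˢ B) ×ˢ Finset.Ico (aB j) (bB j) with hs0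
    set φ : (Zd d × Zd d) × ℤ → Zd d := fun q => V q.1.1 q.1.2 j q.2 with hφ
    have hrw : ∑ p ∈ A ×ˢ B, ∑ t ∈ Finset.Ico (aB j) (bB j),
        |f (eplus (V p.1 p.2 j t, j)) - f (V p.1 p.2 j t)|
        = ∑ q ∈ s, |f (eplus (φ q, j)) - f (φ q)| := by
      rw [hs0, Finset.sum_product, Finset.sum_product, Finset.sum_product]
    rw [hrw]
    set N : ℕ := (∏ i, if j < i then 1 else (Finset.Icc (aA i) (bA i)).card) *
        (∏ i, if i < j then 1 else (Finset.Icc (aB i) (bB i)).card) with hN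
    have hmap : ∀ q ∈ s, φ q ∈ W j := by
      rintro ⟨⟨y, z⟩, t⟩ hq
      rw [hs0, Finset.mem_product] at hq
      obtain ⟨hyz, ht⟩ := hq
      rw [Finset.mem_product] at hyz
      obtain ⟨hyA, hzB⟩ := hyz
      rw [hW, Fintype.mem_piFinset]
      intro i
      rcases lt_trichotomy i j with h | h | h
      · simp only [hφ, V, if_pos h, if_neg (ne_of_lt h)]
        exact Fintype.mem_piFinset.mp hzB i
      · subst h
        simp only [hφ, V, lt_irrefl, if_neg (lt_irrefl i), if_pos rfl, if_pos rfl]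
        exact ht
      · simp only [hφ, V, if_neg (not_lt.mpr h.le), if_neg h.ne']
        exact Fintype.mem_piFinset.mp (hAB hyA) i
    have hfib : ∀ v ∈ W j, (s.filter (fun q => φ q = v)).card ≤ N := by
      intro v _
      have hsub : s.filter (fun q => φ q = v) ⊆
          ((A.filter fun y => ∀ i, j < i → y i = v i) ×ˢ
            (B.filter fun z => ∀ i, i < j → z i = v i)) ×ˢ ({v j} : Finset ℤ) := by
        rintro ⟨⟨y, z⟩, t⟩ hq
        rw [Finset.mem_filter] at hq
        obtain ⟨hqs, hqv⟩ := hq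
        rw [hs0, Finset.mem_product] at hqs
        obtain ⟨hyz, _⟩ := hqs
        rw [Finset.mem_product] at hyz
        rw [Finset.mem_product, Finset.mem_product]
        refine ⟨⟨Finset.mem_filter.mpr ⟨hyz.1, ?_⟩, Finset.mem_filter.mpr ⟨hyz.2, ?_⟩⟩, ?_⟩
        · intro i hi
          have := congrFun hqv i
          simpa only [hφ, V, if_neg (not_lt.mpr hi.le), if_neg hi.ne'] using this
        · intro i hi
          have := congrFun hqv i
          simpa only [hφ, V, if_pos hi] using this
        · have := congrFun hqv j
          simp only [hφ, V, lt_irrefl, if_neg (lt_irrefl j), if_pos rfl] at this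
          simpa using this
      have hcard := Finset.card_le_card hsub
      rw [Finset.card_product, Finset.card_product, Finset.card_singleton, mul_one] at hcard
      refine hcard.trans ?_
      rw [hN]
      have hA' : (A.filter fun y => ∀ i, j < i → y i = v i).card ≤
          ∏ i, if j < i then 1 else (Finset.Icc (aA i) (bA i)).card := by
        have hsubA : (A.filter fun y => ∀ i, j < i → y i = v i) ⊆
            Fintype.piFinset (fun i => if j < i then {v i} else Finset.Icc (aA i) (bA i)) := by
          intro y hy
          rw [Finset.mem_filter] at hy
          rw [Fintype.mem_piFinset]
          intro i
          by_cases h : j < i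
          · rw [if_pos h, Finset.mem_singleton]; exact hy.2 i h
          · rw [if_neg h]; exact Fintype.mem_piFinset.mp hy.1 i
        refine (Finset.card_le_card hsubA).trans (le_of_eq ?_)
        rw [Fintype.card_piFinset]
        refine Finset.prod_congr rfl fun i _ => ?_
        by_cases h : j < i <;> simp [h]
      have hB' : (B.filter fun z => ∀ i, i < j → z i = v i).card ≤
          ∏ i, if i < j then 1 else (Finset.Icc (aB i) (bB i)).card := by
        have hsubB : (B.filter fun z => ∀ i, i < j → z i = v i) ⊆
            Fintype.piFinset (fun i => if i < j then {v i} else Finset.Icc (aB i) (bB i)) := by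
          intro z hz
          rw [Finset.mem_filter] at hz
          rw [Fintype.mem_piFinset]
          intro i
          by_cases h : i < j
          · rw [if_pos h, Finset.mem_singleton]; exact hz.2 i h
          · rw [if_neg h]; exact Fintype.mem_piFinset.mp hz.1 i
        refine (Finset.card_le_card hsubB).trans (le_of_eq ?_)
        rw [Fintype.card_piFinset]
        refine Finset.prod_congr rfl fun i _ => ?_
        by_cases h : i < j <;> simp [h]
      exact Nat.mul_le_mul hA' hB'
    have hcomp := sum_comp_le s (W j) φ (fun v => |f (eplus (v, j)) - f v|) N hmap hfib
      (fun v => abs_nonneg _)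
    -- numeric bound on N
    have hNnum : (N : ℝ) ≤ ((A.card : ℝ) * B.card) * ((n:ℝ) ^ (d-1))⁻¹ := by
      have hnatt : N * n ^ (d-1) ≤ A.card * B.card := by
        have hcA : ∀ i, n ≤ (Finset.Icc (aA i) (bA i)).card := by
          intro i; rw [Int.card_Icc]; have := hs i; omega
        have hcB : ∀ i, n ≤ (Finset.Icc (aB i) (bB i)).card := by
          intro i; rw [Int.card_Icc]
          have h4 := hs i; have h5 := h1 i; have h6 := h3 i; omega
        have hc1 : (Finset.univ.filter (fun i : Fin d => j < i)).card = d - 1 - (j:ℕ) := by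
          have : Finset.univ.filter (fun i : Fin d => j < i) = Finset.Ioi j := by
            ext i; simp [Finset.mem_Ioi]
          rw [this, Fin.card_Ioi]
        have hc2 : (Finset.univ.filter (fun i : Fin d => i < j)).card = (j:ℕ) := by
          have : Finset.univ.filter (fun i : Fin d => i < j) = Finset.Iio j := by
            ext i; simp [Finset.mem_Iio]
          rw [this, Fin.card_Iio]
        have e1 : ∏ i, (if j < i then 1 else (Finset.Icc (aA i) (bA i)).card)
            = ∏ i ∈ Finset.univ.filter (fun i => ¬ j < i), (Finset.Icc (aA i) (bA i)).card := by
          rw [← Finset.prod_filter_mul_prod_filter_not Finset.univ (fun i => j < i)]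
          rw [Finset.prod_congr rfl (fun i hi => if_pos (Finset.mem_filter.mp hi).2),
            Finset.prod_const_one, one_mul]
          exact Finset.prod_congr rfl (fun i hi => if_neg (Finset.mem_filter.mp hi).2)
        have e2 : ∏ i, (if i < j then 1 else (Finset.Icc (aB i) (bB i)).card)
            = ∏ i ∈ Finset.univ.filter (fun i => ¬ i < j), (Finset.Icc (aB i) (bB i)).card := by
          rw [← Finset.prod_filter_mul_prod_filter_not Finset.univ (fun i => i < j)]
          rw [Finset.prod_congr rfl (fun i hi => if_pos (Finset.mem_filter.mp hi).2),
            Finset.prod_const_one, one_mul]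
          exact Finset.prod_congr rfl (fun i hi => if_neg (Finset.mem_filter.mp hi).2)
        have gA : (∏ i, (if j < i then 1 else (Finset.Icc (aA i) (bA i)).card)) * n ^ (d - 1 - (j:ℕ))
            ≤ A.card := by
          rw [e1, cardA, ← Finset.prod_filter_mul_prod_filter_not Finset.univ (fun i => j < i)
            (fun i => (Finset.Icc (aA i) (bA i)).card)]
          rw [mul_comm (∏ i ∈ Finset.univ.filter (fun i => j < i), (Finset.Icc (aA i) (bA i)).card)
            (∏ i ∈ Finset.univ.filter (fun i => ¬ j < i), (Finset.Icc (aA i) (bA i)).card)]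
          apply Nat.mul_le_mul le_rfl
          rw [← hc1]
          exact Finset.pow_card_le_prod _ _ _ (fun i _ => hcA i)
        have gB : (∏ i, (if i < j then 1 else (Finset.Icc (aB i) (bB i)).card)) * n ^ ((j:ℕ))
            ≤ B.card := by
          rw [e2, cardB, ← Finset.prod_filter_mul_prod_filter_not Finset.univ (fun i => i < j)
            (fun i => (Finset.Icc (aB i) (bB i)).card)]
          rw [mul_comm (∏ i ∈ Finset.univ.filter (fun i => i < j), (Finset.Icc (aB i) (bB i)).card)
            (∏ i ∈ Finset.univ.filter (fun i => ¬ i < j), (Finset.Icc (aB i) (bB i)).card)]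
          apply Nat.mul_le_mul le_rfl
          rw [← hc2]
          exact Finset.pow_card_le_prod _ _ _ (fun i _ => hcB i)
        calc N * n ^ (d-1)
            = ((∏ i, (if j < i then 1 else (Finset.Icc (aA i) (bA i)).card)) * n ^ (d - 1 - (j:ℕ)))
              * ((∏ i, (if i < j then 1 else (Finset.Icc (aB i) (bB i)).card)) * n ^ ((j:ℕ))) := by
              rw [hN]
              have hj : (j:ℕ) ≤ d - 1 := by have := j.isLt; omega
              have : n ^ (d-1) = n ^ (d - 1 - (j:ℕ)) * n ^ ((j:ℕ)) := by
                rw [← pow_add]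
                congr 1
                omega
              rw [this]; ring
          _ ≤ A.card * B.card := Nat.mul_le_mul gA gB
      have hpow : (0:ℝ) < (n:ℝ) ^ (d-1) := by positivity
      calc (N:ℝ) ≤ ((A.card : ℝ) * B.card) / ((n:ℝ) ^ (d-1)) := by
            rw [le_div_iff₀ hpow]
            calc (N:ℝ) * (n:ℝ) ^ (d-1) = ((N * n ^ (d-1) : ℕ) : ℝ) := by push_cast; ring
              _ ≤ ((A.card * B.card : ℕ) : ℝ) := by exact_mod_cast hnatt
              _ = (A.card : ℝ) * B.card := by push_cast; ring
        _ = ((A.card : ℝ) * B.card) * ((n:ℝ) ^ (d-1))⁻¹ := by rw [div_eq_mul_inv]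
    refine hcomp.trans ?_
    rw [← mul_assoc]
    exact mul_le_mul_of_nonneg_right hNnum (Finset.sum_nonneg fun v _ => abs_nonneg _)
  have hD : (0:ℝ) < (A.card : ℝ) * B.card := mul_pos hAne hBne
  have chain : |∑ p ∈ A ×ˢ B, (f p.1 - f p.2)|
      ≤ ((A.card:ℝ) * B.card) *
        (((n:ℝ) ^ (d-1))⁻¹ * ∑ j : Fin d, ∑ v ∈ W j, |f (eplus (v,j)) - f v|) := by
    refine (Finset.abs_sum_le_sum_abs _ _).trans ?_
    refine (Finset.sum_le_sum hpath).trans ?_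
    rw [Finset.sum_comm]
    refine (Finset.sum_le_sum (fun j (_ : j ∈ Finset.univ) => hcount j)).trans (le_of_eq ?_)
    rw [← Finset.mul_sum, ← Finset.mul_sum]
  rw [div_le_iff₀ hD]
  refine chain.trans (le_of_eq ?_)
  ring

/-- Potential-kernel bound on the oscillation of a function around
its box average (inequality (2.8) in the proof of Theorem 2.5). -/
theorem potential_kernel_oscillation_bound
    (d : ℕ) (hd : 2 ≤ d) :
    ∃ C : ℝ, 0 ≤ C ∧ ∀ r : ℕ, 1 ≤ r → ∀ f : Zd d → ℝ, ∀ x ∈ box d r,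
      |f x - avg d r f| ≤
        C * ∑ e ∈ edgeBox d r,
          (1 + eucNorm (x - e.1)) ^ (-((d : ℝ) - 1)) * |f (eplus e) - f e.1| := by
  classical
  set c1 : ℝ := (2:ℝ) ^ (d-1) with hc1
  set a : ℝ := ((1:ℝ)/2) ^ (d-1) with ha
  refine ⟨2 * c1 * (2 * Real.sqrt d) ^ (d-1), by positivity, ?_⟩
  intro r hr f x hx
  have hxbox : ∀ i, -(r:ℤ) ≤ x i ∧ x i ≤ r := by
    intro i
    exact Finset.mem_Icc.mp (Fintype.mem_piFinset.mp hx i)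
  set K := Nat.clog 2 (2*r+1) with hK
  set lo : ℕ → Fin d → ℤ := fun k i => max (x i - ((2:ℤ)^k - 1)) (-(r:ℤ)) with hlo
  set hi : ℕ → Fin d → ℤ := fun k i => min (x i + ((2:ℤ)^k - 1)) (r:ℤ) with hhi
  have hpk : ∀ k : ℕ, (1:ℤ) ≤ 2^k := fun k => one_le_pow₀ (by norm_num)
  have hmono : ∀ k : ℕ, (2:ℤ)^k ≤ 2^(k+1) := by
    intro k; have := hpk k; rw [pow_succ]; omega
  have hloi : ∀ k i, lo k i ≤ x i := fun k i => max_le (by have := hpk k; omega) (hxbox i).1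
  have hhii : ∀ k i, x i ≤ hi k i := fun k i => le_min (by have := hpk k; omega) (hxbox i).2
  have h2 : ∀ k i, lo k i ≤ hi k i := fun k i => (hloi k i).trans (hhii k i)
  have h1 : ∀ k i, lo (k+1) i ≤ lo k i := by
    intro k i; apply max_le_max _ le_rfl; have := hmono k; omega
  have h3 : ∀ k i, hi k i ≤ hi (k+1) i := by
    intro k i; apply min_le_min _ le_rfl; have := hmono k; omega
  have hlor : ∀ k i, -(r:ℤ) ≤ lo k i := fun k i => le_max_right _ _
  have hhir : ∀ k i, hi k i ≤ (r:ℤ) := fun k i => min_le_right _ _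
  set G : ℕ → ℝ := fun k =>
    (∑ y ∈ Fintype.piFinset (fun i => Finset.Icc (lo k i) (hi k i)), f y) /
      ((Fintype.piFinset (fun i => Finset.Icc (lo k i) (hi k i))).card : ℝ) with hG
  -- bottom: G 0 = f x
  have hA0 : Fintype.piFinset (fun i => Finset.Icc (lo 0 i) (hi 0 i)) = {x} := by
    have hl : ∀ i, lo 0 i = x i := by
      intro i; simp only [hlo, pow_zero]; have := (hxbox i).1; omega
    have hh : ∀ i, hi 0 i = x i := by
      intro i; simp only [hhi, pow_zero]; have := (hxbox i).2; omega
    ext y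
    simp only [Fintype.mem_piFinset, Finset.mem_Icc, Finset.mem_singleton]
    constructor
    · intro h; funext i; have := h i; rw [hl i, hh i] at this; omega
    · rintro rfl i; rw [hl i, hh i]; exact ⟨le_rfl, le_rfl⟩
  have hG0 : G 0 = f x := by simp only [hG]; rw [hA0]; simp
  -- top: G K = avg
  have h2K : (2*r+1 : ℕ) ≤ 2^K := Nat.le_pow_clog (by norm_num) _
  have hGK : G K = avg d r f := by
    have h2KZ : (2*(r:ℤ)+1) ≤ 2^K := by exact_mod_cast h2K
    have hfam : (fun i : Fin d => Finset.Icc (lo K i) (hi K i))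
        = fun _ => Finset.Icc (-(r:ℤ)) (r:ℤ) := by
      funext i
      have hl : lo K i = -(r:ℤ) := by
        simp only [hlo]; have := (hxbox i).2; omega
      have hh : hi K i = (r:ℤ) := by
        simp only [hhi]; have := (hxbox i).1; omega
      rw [hl, hh]
    simp only [hG]; rw [hfam]; rfl
  -- telescoping
  have htel : f x - avg d r f = ∑ k ∈ Finset.range K, (G k - G (k+1)) := by
    rw [Finset.sum_range_sub' G K, hG0, hGK]
  -- sides
  set n : ℕ → ℕ := fun k => min (2^k) (r+1) with hn
  have hn1 : ∀ k, 1 ≤ n k := by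
    intro k; simp only [hn]; have : 1 ≤ 2^k := Nat.one_le_two_pow; omega
  have hside : ∀ k i, (n k : ℤ) ≤ hi k i - lo k i + 1 := by
    intro k i
    have hcast : ((n k : ℕ) : ℤ) = min ((2:ℤ)^k) ((r:ℤ)+1) := by
      simp only [hn]; push_cast; rfl
    rw [hcast]
    simp only [hlo, hhi]
    have := hxbox i; have := hpk k
    omega
  set g : Edge d → ℝ := fun e => |f (eplus e) - f e.1| with hg
  set W : Fin d → ℕ → Finset (Zd d) := fun j k => Fintype.piFinset
      (fun i => if i = j then Finset.Ico (lo (k+1) j) (hi (k+1) j)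
        else Finset.Icc (lo (k+1) i) (hi (k+1) i)) with hWdef
  -- the per-level bound from step_bound
  have hstep : ∀ k, |G k - G (k+1)| ≤ ((n k : ℝ) ^ (d-1))⁻¹ *
      ∑ j : Fin d, ∑ v ∈ W j k, g (v, j) := by
    intro k
    exact step_bound f (lo k) (hi k) (lo (k+1)) (hi (k+1)) (n k) (hn1 k)
      (h1 k) (h2 k) (h3 k) (hside k)
  -- coefficient bound for k < K
  have hcoef : ∀ k < K, ((n k : ℝ) ^ (d-1))⁻¹ ≤ c1 * a ^ k := by
    intro k hk
    have hnk : 2^k ≤ 2 * n k := by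
      have hlt : ¬ (2*r+1 ≤ 2^k) := by
        intro hcon
        exact absurd ((Nat.clog_le_iff_le_pow (by norm_num)).mpr hcon) (by omega)
      simp only [hn]; omega
    have h2kR : ((2:ℝ))^k ≤ 2 * (n k : ℝ) := by exact_mod_cast hnk
    have hnkpos : (0:ℝ) < (n k : ℝ) := by exact_mod_cast hn1 k
    have key : ((2:ℝ)^k) ^ (d-1) ≤ c1 * (n k : ℝ) ^ (d-1) := by
      calc ((2:ℝ)^k) ^ (d-1) ≤ (2 * (n k : ℝ)) ^ (d-1) :=
            pow_le_pow_left₀ (by positivity) h2kR _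
        _ = c1 * (n k : ℝ) ^ (d-1) := by rw [mul_pow, hc1]
    have hak : a ^ k = (((2:ℝ)^k) ^ (d-1))⁻¹ := by
      rw [ha, ← pow_mul, ← pow_mul, mul_comm (d-1) k, one_div, inv_pow]
    rw [hak]
    have hp1 : (0:ℝ) < ((2:ℝ)^k) ^ (d-1) := by positivity
    have hp2 : (0:ℝ) < ((n k:ℝ)) ^ (d-1) := by positivity
    rw [← one_div, ← div_eq_mul_inv, div_le_div_iff₀ hp2 hp1, one_mul]
    exact key
  -- a-power identity and a ≤ 1/2
  have haka : ∀ k : ℕ, a ^ k = (((2:ℝ)^k) ^ (d-1))⁻¹ := by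
    intro k
    rw [ha, ← pow_mul, ← pow_mul, mul_comm (d-1) k, one_div, inv_pow]
  have ha0 : (0:ℝ) ≤ a := by rw [ha]; positivity
  have hahalf : a ≤ 1/2 := by
    rw [ha]
    calc ((1:ℝ)/2) ^ (d-1) ≤ ((1:ℝ)/2) ^ 1 :=
          pow_le_pow_of_le_one (by norm_num) (by norm_num) (by omega)
      _ = 1/2 := pow_one _
  -- kernel majorant
  set M : Zd d → ℝ := fun v =>
    (2 * Real.sqrt d) ^ (d-1) * (((1 + eucNorm (x - v)) ^ (d-1) : ℝ))⁻¹ with hM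
  have heucnn : ∀ v : Zd d, (0:ℝ) ≤ eucNorm v := fun v => Real.sqrt_nonneg _
  have hMnn : ∀ v, 0 ≤ M v := by
    intro v
    have h0 := heucnn (x - v)
    apply mul_nonneg (by positivity)
    exact inv_nonneg.mpr (pow_nonneg (by linarith) _)
  have hsd : (1:ℝ) ≤ Real.sqrt d := by
    rw [show (1:ℝ) = Real.sqrt 1 by simp]
    exact Real.sqrt_le_sqrt (by exact_mod_cast (by omega : 1 ≤ d))
  have hkern : ∀ (k : ℕ) (j : Fin d) (v : Zd d), v ∈ W j k → a ^ k ≤ M v := by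
    intro k j v hv
    have hco : ∀ i, lo (k+1) i ≤ v i ∧ v i ≤ hi (k+1) i := by
      intro i
      have hvi := Fintype.mem_piFinset.mp hv i
      by_cases h : i = j
      · subst h
        rw [if_pos rfl] at hvi
        have := Finset.mem_Ico.mp hvi
        exact ⟨this.1, this.2.le⟩
      · rw [if_neg h] at hvi
        exact Finset.mem_Icc.mp hvi
    have hbd : ∀ i, -((2:ℤ)^(k+1) - 1) ≤ x i - v i ∧ x i - v i ≤ (2:ℤ)^(k+1) - 1 := by
      intro i
      have h4 := hco i
      have h5 : x i - ((2:ℤ)^(k+1) - 1) ≤ lo (k+1) i := by simp only [hlo]; exact le_max_left _ _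
      have h6 : hi (k+1) i ≤ x i + ((2:ℤ)^(k+1) - 1) := by simp only [hhi]; exact min_le_left _ _
      omega
    set cR : ℝ := (2:ℝ)^(k+1) - 1 with hcR
    have hcR0 : (0:ℝ) ≤ cR := by rw [hcR]; have : (1:ℝ) ≤ (2:ℝ)^(k+1) := one_le_pow₀ (by norm_num); linarith
    have heuc : eucNorm (x - v) ≤ Real.sqrt d * cR := by
      have hsum : ∑ i, (((x - v) i : ℝ))^2 ≤ (d : ℝ) * cR^2 := by
        calc ∑ i, (((x - v) i : ℝ))^2 ≤ ∑ _i : Fin d, cR^2 := by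
              apply Finset.sum_le_sum
              intro i _
              have hb := hbd i
              have hb1 : -((2:ℝ)^(k+1) - 1) ≤ ((x i - v i : ℤ) : ℝ) := by exact_mod_cast hb.1
              have hb2 : ((x i - v i : ℤ) : ℝ) ≤ (2:ℝ)^(k+1) - 1 := by exact_mod_cast hb.2
              have hxv : (x - v) i = x i - v i := rfl
              rw [hxv, hcR]
              nlinarith [hb1, hb2]
          _ = (d : ℝ) * cR^2 := by rw [Finset.sum_const, Finset.card_univ, Fintype.card_fin, nsmul_eq_mul]
      calc eucNorm (x - v) ≤ Real.sqrt ((d:ℝ) * cR^2) := Real.sqrt_le_sqrt hsum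
        _ = Real.sqrt d * cR := by
            rw [Real.sqrt_mul (by positivity), Real.sqrt_sq hcR0]
    have hDb : 1 + eucNorm (x - v) ≤ Real.sqrt d * (2:ℝ)^(k+1) := by
      have hexp : Real.sqrt d * cR = Real.sqrt d * (2:ℝ)^(k+1) - Real.sqrt d := by rw [hcR]; ring
      linarith
    have hpowle : (1 + eucNorm (x - v))^(d-1)
        ≤ ((2*Real.sqrt d)^(d-1)) * (((2:ℝ)^k)^(d-1)) := by
      have h0 := heucnn (x - v)
      calc (1 + eucNorm (x - v))^(d-1) ≤ (Real.sqrt d * (2:ℝ)^(k+1))^(d-1) :=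
            pow_le_pow_left₀ (by linarith) hDb _
        _ = ((2*Real.sqrt d) * (2:ℝ)^k)^(d-1) := by rw [pow_succ]; ring_nf
        _ = ((2*Real.sqrt d)^(d-1)) * (((2:ℝ)^k)^(d-1)) := mul_pow _ _ _
    rw [haka]
    show (((2:ℝ)^k)^(d-1))⁻¹ ≤ (2*Real.sqrt d)^(d-1) * (((1 + eucNorm (x - v))^(d-1) : ℝ))⁻¹
    have hX : (0:ℝ) < ((2:ℝ)^k)^(d-1) := by positivity
    have hY : (0:ℝ) < (1 + eucNorm (x - v))^(d-1) := by
      have h0 := heucnn (x - v); positivity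
    rw [← one_div, ← div_eq_mul_inv, div_le_div_iff₀ hX hY, one_mul]
    calc (1 + eucNorm (x - v))^(d-1) ≤ ((2*Real.sqrt d)^(d-1)) * (((2:ℝ)^k)^(d-1)) := hpowle
      _ = (2*Real.sqrt d)^(d-1) * ((2:ℝ)^k)^(d-1) := rfl
  -- Wtop and inclusion
  set Wtop : Fin d → Finset (Zd d) := fun j => Fintype.piFinset
      (fun i => if i = j then Finset.Ico (-(r:ℤ)) (r:ℤ) else Finset.Icc (-(r:ℤ)) (r:ℤ)) with hWtop
  have hWsub : ∀ j k, W j k ⊆ Wtop j := by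
    intro j k v hv
    rw [Fintype.mem_piFinset] at hv ⊢
    intro i
    have hvi := hv i
    by_cases h : i = j
    · subst h
      rw [if_pos rfl] at hvi ⊢
      exact Finset.Ico_subset_Ico (hlor (k+1) i) (hhir (k+1) i) hvi
    · rw [if_neg h] at hvi ⊢
      exact Finset.Icc_subset_Icc (hlor (k+1) i) (hhir (k+1) i) hvi
  have hrestr : ∀ (k : ℕ) (j : Fin d) (F : Zd d → ℝ),
      ∑ v ∈ W j k, F v = ∑ v ∈ Wtop j, if v ∈ W j k then F v else 0 := by
    intro k j F
    rw [Finset.sum_ite_mem, Finset.inter_eq_right.mpr (hWsub j k)]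
  -- gather
  have main1 : |f x - avg d r f| ≤ ∑ j : Fin d, ∑ v ∈ Wtop j, (c1 * (2 * M v)) * g (v, j) := by
    calc |f x - avg d r f| = |∑ k ∈ Finset.range K, (G k - G (k+1))| := by rw [htel]
      _ ≤ ∑ k ∈ Finset.range K, |G k - G (k+1)| := Finset.abs_sum_le_sum_abs _ _
      _ ≤ ∑ k ∈ Finset.range K, (c1 * a^k) * (∑ j : Fin d, ∑ v ∈ W j k, g (v,j)) := by
          apply Finset.sum_le_sum
          intro k hk
          refine (hstep k).trans ?_
          apply mul_le_mul_of_nonneg_right (hcoef k (Finset.mem_range.mp hk))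
          apply Finset.sum_nonneg
          intro j _
          apply Finset.sum_nonneg
          intro v _
          exact abs_nonneg _
      _ = ∑ k ∈ Finset.range K, ∑ j : Fin d, ∑ v ∈ Wtop j,
            (if v ∈ W j k then c1 * a^k else 0) * g (v,j) := by
          refine Finset.sum_congr rfl fun k _ => ?_
          rw [Finset.mul_sum]
          refine Finset.sum_congr rfl fun j _ => ?_
          rw [Finset.mul_sum, hrestr k j (fun v => (c1 * a^k) * g (v,j))]
          refine Finset.sum_congr rfl fun v _ => ?_
          split_ifs <;> simp
      _ = ∑ j : Fin d, ∑ v ∈ Wtop j,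
            (∑ k ∈ Finset.range K, if v ∈ W j k then c1 * a^k else 0) * g (v,j) := by
          rw [Finset.sum_comm]
          refine Finset.sum_congr rfl fun j _ => ?_
          rw [Finset.sum_comm]
          refine Finset.sum_congr rfl fun v _ => ?_
          rw [Finset.sum_mul]
      _ ≤ ∑ j : Fin d, ∑ v ∈ Wtop j, (c1 * (2 * M v)) * g (v,j) := by
          apply Finset.sum_le_sum
          intro j _
          apply Finset.sum_le_sum
          intro v _
          apply mul_le_mul_of_nonneg_right _ (abs_nonneg _)
          have e1 : ∑ k ∈ Finset.range K, (if v ∈ W j k then c1 * a^k else 0)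
              = c1 * ∑ k ∈ Finset.range K, (if v ∈ W j k then a^k else 0) := by
            rw [Finset.mul_sum]
            refine Finset.sum_congr rfl fun k _ => ?_
            split_ifs <;> simp
          rw [e1]
          apply mul_le_mul_of_nonneg_left _ (by rw [hc1]; positivity)
          exact geom_filter_le ha0 hahalf (hMnn v) K _ (fun k _ hkv => hkern k j v hkv)
  -- from the slices to the edge set
  set S : Finset (Edge d) := Finset.univ.biUnion
      (fun j => (Wtop j).image (fun v => ((v, j) : Edge d))) with hS
  have hdisj : ((Finset.univ : Finset (Fin d)) : Set (Fin d)).PairwiseDisjoint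
      (fun j => (Wtop j).image (fun v => ((v, j) : Edge d))) := by
    intro j1 _ j2 _ hne
    simp only [Function.onFun]
    rw [Finset.disjoint_left]
    rintro e he1 he2
    obtain ⟨v, _, rfl⟩ := Finset.mem_image.mp he1
    obtain ⟨w, _, hw⟩ := Finset.mem_image.mp he2
    exact hne (congrArg Prod.snd hw).symm
  have hsum : ∑ e ∈ S, (c1 * (2 * M e.1)) * g e
      = ∑ j : Fin d, ∑ v ∈ Wtop j, (c1 * (2 * M v)) * g (v, j) := by
    rw [hS, Finset.sum_biUnion hdisj]
    refine Finset.sum_congr rfl fun j _ => ?_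
    rw [Finset.sum_image]
    intro v _ w _ h
    exact (Prod.mk.injEq _ _ _ _).mp h |>.1
  have hSsub : S ⊆ edgeBox d r := by
    intro e he
    rw [hS, Finset.mem_biUnion] at he
    obtain ⟨j, _, hej⟩ := he
    obtain ⟨v, hv, rfl⟩ := Finset.mem_image.mp hej
    rw [Fintype.mem_piFinset] at hv
    have hvbox : v ∈ box d r := by
      rw [box, Fintype.mem_piFinset]
      intro i
      have hvi := hv i
      by_cases h : i = j
      · subst h
        rw [if_pos rfl] at hvi
        have := Finset.mem_Ico.mp hvi
        exact Finset.mem_Icc.mpr ⟨this.1, this.2.le⟩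
      · rwa [if_neg h] at hvi
    have hebox : eplus (v, j) ∈ box d r := by
      rw [box, Fintype.mem_piFinset]
      intro i
      have hvi := hv i
      rw [Finset.mem_Icc]
      by_cases h : i = j
      · subst h
        rw [if_pos rfl] at hvi
        have h7 := Finset.mem_Ico.mp hvi
        have : eplus (v, i) i = v i + 1 := by
          simp [eplus, Pi.single_eq_same]
        rw [this]
        omega
      · rw [if_neg h] at hvi
        have h7 := Finset.mem_Icc.mp hvi
        have : eplus (v, j) i = v i := by
          simp [eplus, Pi.single_eq_of_ne h]
        rw [this]
        omega
    rw [edgeBox, Finset.mem_filter, Finset.mem_product]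
    exact ⟨⟨hvbox, Finset.mem_univ _⟩, hebox⟩
  have main2 : |f x - avg d r f| ≤ ∑ e ∈ edgeBox d r, (c1 * (2 * M e.1)) * g e := by
    refine main1.trans ?_
    rw [← hsum]
    apply Finset.sum_le_sum_of_subset_of_nonneg hSsub
    intro e _ _
    have := hMnn e.1
    have : (0:ℝ) ≤ g e := abs_nonneg _
    apply mul_nonneg (mul_nonneg (by rw [hc1]; positivity) (by linarith [hMnn e.1])) this
  -- rewrite into the required form
  have hrpow : ∀ v : Zd d,
      (1 + eucNorm (x - v)) ^ (-((d:ℝ) - 1)) = (((1 + eucNorm (x - v)) ^ (d-1) : ℝ))⁻¹ := by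
    intro v
    have h0 := heucnn (x - v)
    have h1 : (0:ℝ) < 1 + eucNorm (x - v) := by linarith
    rw [← Real.rpow_natCast (1 + eucNorm (x - v)) (d-1), ← Real.rpow_neg h1.le]
    congr 1
    have hcast : ((d - 1 : ℕ) : ℝ) = (d:ℝ) - 1 := by
      have h1d : 1 ≤ d := by omega
      push_cast [h1d]
      ring
    rw [hcast]
  refine main2.trans (le_of_eq ?_)
  rw [Finset.mul_sum]
  refine Finset.sum_congr rfl fun e _ => ?_
  rw [hrpow e.1, hM, hg]
  ring

end AnchoredNash
end
end
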